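/- Let Θ be a connected simple graph and let 𝒫 be a property of finite sets of edges of Θ which is stable under passing to subsets and under finite unions, and suppose at least one 𝒫-cut exists. For a 𝒫-narrow cut C, the number m(C) of 𝒫-narrow cuts which are not nested with C is finite; call C optimally nested if m(C) is minimal among all 𝒫-narrow cuts. Then any two optimally nested 𝒫-narrow cuts are nested with each other. -/

import Mathlib

section Cuts

variable {V : Type*}

/-- A finite set `F` of edges of `Θ` is a set of *cutting edges* if `Θ − F` is
disconnected and has at least two infinite connected components. -/
def IsCuttingEdges (Θ : SimpleGraph V) (F : Set (Sym2 V)) : Prop :=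
  F.Finite ∧ F ⊆ Θ.edgeSet ∧ ¬(Θ.deleteEdges F).Connected ∧
    ∃ K L : (Θ.deleteEdges F).ConnectedComponent,
      K ≠ L ∧ K.supp.Infinite ∧ L.supp.Infinite

/-- A *cut* is the vertex set of an infinite connected component of `Θ − F`
for some set of cutting edges `F`. -/
def IsCut (Θ : SimpleGraph V) (C : Set V) : Prop :=
  ∃ F : Set (Sym2 V), IsCuttingEdges Θ F ∧
    ∃ K : (Θ.deleteEdges F).ConnectedComponent, K.supp.Infinite ∧ C = K.supp

/-- The *boundary* of a set of vertices `C`: all edges of `Θ` with exactly one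
endpoint in `C`. -/
def cutBdry (Θ : SimpleGraph V) (C : Set V) : Set (Sym2 V) :=
  {e | e ∈ Θ.edgeSet ∧ ∃ u v : V, e = s(u, v) ∧ u ∈ C ∧ v ∉ C}

/-- A `P`-cut: a cut whose boundary has property `P`. -/
def IsPCut (Θ : SimpleGraph V) (P : Set (Sym2 V) → Prop) (C : Set V) : Prop :=
  IsCut Θ C ∧ P (cutBdry Θ C)

/-- A `P`-narrow cut: a `P`-cut whose boundary has minimal cardinality among
all `P`-cuts. -/
def IsPNarrow (Θ : SimpleGraph V) (P : Set (Sym2 V) → Prop) (C : Set V) : Prop :=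
  IsPCut Θ P C ∧ ∀ D : Set V, IsPCut Θ P D → (cutBdry Θ C).ncard ≤ (cutBdry Θ D).ncard

/-- Two subsets `C` and `D` of the vertex set are *nested* if `C` or its
complement is contained in `D` or its complement. -/
def Nested (C D : Set V) : Prop :=
  C ⊆ D ∨ C ⊆ Dᶜ ∨ Cᶜ ⊆ D ∨ Cᶜ ⊆ Dᶜ

end Cuts


namespace KronProof

open Set SimpleGraph

variable {V : Type*} {Θ : SimpleGraph V} {P : Set (Sym2 V) → Prop}

/-! ### Basic boundary lemmas -/

lemma cutBdry_subset_edgeSet (Θ : SimpleGraph V) (C : Set V) :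
    cutBdry Θ C ⊆ Θ.edgeSet := fun _ he => he.1

lemma mem_cutBdry_of {C : Set V} {x y : V} (h : Θ.Adj x y) (hx : x ∈ C) (hy : y ∉ C) :
    s(x, y) ∈ cutBdry Θ C :=
  ⟨h, x, y, rfl, hx, hy⟩

lemma mem_cutBdry_elim {C : Set V} {e : Sym2 V} (he : e ∈ cutBdry Θ C) {x y : V}
    (hxy : e = s(x, y)) :
    Θ.Adj x y ∧ ((x ∈ C ∧ y ∉ C) ∨ (y ∈ C ∧ x ∉ C)) := by
  obtain ⟨hE, p, q, hpq, hp, hq⟩ := he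
  subst hxy
  rw [SimpleGraph.mem_edgeSet] at hE
  refine ⟨hE, ?_⟩
  rw [Sym2.eq_iff] at hpq
  rcases hpq with ⟨rfl, rfl⟩ | ⟨rfl, rfl⟩
  · exact Or.inl ⟨hp, hq⟩
  · exact Or.inr ⟨hp, hq⟩

lemma not_mem_cutBdry_in {C : Set V} {x y : V} (hx : x ∈ C) (hy : y ∈ C) :
    s(x, y) ∉ cutBdry Θ C := by
  intro he
  rcases (mem_cutBdry_elim he rfl).2 with ⟨_, h⟩ | ⟨_, h⟩ <;> exact h (by assumption)

lemma not_mem_cutBdry_out {C : Set V} {x y : V} (hx : x ∉ C) (hy : y ∉ C) :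
    s(x, y) ∉ cutBdry Θ C := by
  intro he
  rcases (mem_cutBdry_elim he rfl).2 with ⟨h, _⟩ | ⟨h, _⟩ <;> exact (by assumption : ¬_) h

lemma side_iff_of_not_bdry {C : Set V} {x y : V} (he : s(x, y) ∉ cutBdry Θ C)
    (h : Θ.Adj x y) : (x ∈ C ↔ y ∈ C) := by
  constructor
  · intro hx; by_contra hy; exact he (mem_cutBdry_of h hx hy)
  · intro hy; by_contra hx
    exact he (by rw [Sym2.eq_swap]; exact mem_cutBdry_of h.symm hy hx)

lemma cutBdry_compl (Θ : SimpleGraph V) (C : Set V) : cutBdry Θ Cᶜ = cutBdry Θ C := by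
  ext e
  constructor <;> intro ⟨hE, p, q, hpq, hp, hq⟩
  · exact ⟨hE, q, p, hpq.trans (Sym2.eq_swap), by simpa using hq, by simpa using hp⟩
  · exact ⟨hE, q, p, hpq.trans (Sym2.eq_swap), by simpa using hq, by simpa using hp⟩

/-- An edge of `Θ` which is not in `F` survives in `Θ.deleteEdges F`. -/
lemma deleteEdges_adj_of_not_mem {F : Set (Sym2 V)} {x y : V} (h : Θ.Adj x y)
    (he : s(x, y) ∉ F) : (Θ.deleteEdges F).Adj x y := by
  rw [SimpleGraph.deleteEdges_adj]; exact ⟨h, he⟩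

/-! ### Components -/

/-- `S` is the vertex set of a connected component of `G`. -/
def IsCompOf (G : SimpleGraph V) (S : Set V) : Prop :=
  ∃ x, x ∈ S ∧ S = {y | G.Reachable x y}

lemma isCompOf_class (G : SimpleGraph V) (x : V) : IsCompOf G {y | G.Reachable x y} :=
  ⟨x, by simp only [Set.mem_setOf_eq]; exact Reachable.refl x, rfl⟩

lemma IsCompOf.nonempty {G : SimpleGraph V} {S : Set V} (h : IsCompOf G S) : S.Nonempty := by
  obtain ⟨x, hx, -⟩ := h; exact ⟨x, hx⟩

lemma IsCompOf.mem_iff {G : SimpleGraph V} {S : Set V} (h : IsCompOf G S) {x : V}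
    (hx : x ∈ S) (y : V) : y ∈ S ↔ G.Reachable x y := by
  obtain ⟨x₀, hx₀, rfl⟩ := h
  constructor
  · intro hy; exact (Reachable.symm hx).trans hy
  · intro hy; exact Reachable.trans hx hy

lemma IsCompOf.reach_mem {G : SimpleGraph V} {S : Set V} (h : IsCompOf G S) {x y : V}
    (hx : x ∈ S) (hr : G.Reachable x y) : y ∈ S :=
  (h.mem_iff hx y).2 hr

lemma IsCompOf.adj_mem {G : SimpleGraph V} {S : Set V} (h : IsCompOf G S) {x y : V}
    (hx : x ∈ S) (ha : G.Adj x y) : y ∈ S :=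
  h.reach_mem hx ha.reachable

lemma IsCompOf.reach_of_mem {G : SimpleGraph V} {S : Set V} (h : IsCompOf G S) {x y : V}
    (hx : x ∈ S) (hy : y ∈ S) : G.Reachable x y :=
  (h.mem_iff hx y).1 hy

lemma IsCompOf.not_reach {G : SimpleGraph V} {S : Set V} (h : IsCompOf G S) {x y : V}
    (hx : x ∈ S) (hy : y ∉ S) : ¬ G.Reachable x y :=
  fun hr => hy (h.reach_mem hx hr)

lemma IsCompOf.eq_of_mem {G : SimpleGraph V} {S S' : Set V} (h : IsCompOf G S)
    (h' : IsCompOf G S') {x : V} (hx : x ∈ S) (hx' : x ∈ S') : S = S' := by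
  ext y
  rw [h.mem_iff hx, h'.mem_iff hx']

lemma IsCompOf.disjoint {G : SimpleGraph V} {S S' : Set V} (h : IsCompOf G S)
    (h' : IsCompOf G S') (hne : S ≠ S') : S ∩ S' = ∅ := by
  by_contra hcon
  obtain ⟨x, hx, hx'⟩ := Set.nonempty_iff_ne_empty.2 hcon
  exact hne (h.eq_of_mem h' hx hx')

lemma isCompOf_supp {G : SimpleGraph V} (K : G.ConnectedComponent) : IsCompOf G K.supp := by
  obtain ⟨x, hx⟩ := K.exists_rep
  have hx' : G.connectedComponentMk x = K := hx
  refine ⟨x, by simp [ConnectedComponent.mem_supp_iff, hx'], ?_⟩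
  ext y
  simp only [ConnectedComponent.mem_supp_iff, Set.mem_setOf_eq, ← hx', ConnectedComponent.eq]
  exact ⟨fun h => h.symm, fun h => h.symm⟩

lemma IsCompOf.exists_supp {G : SimpleGraph V} {S : Set V} (h : IsCompOf G S) :
    ∃ K : G.ConnectedComponent, S = K.supp := by
  obtain ⟨x, hx, rfl⟩ := h
  refine ⟨G.connectedComponentMk x, ?_⟩
  ext y
  simp only [Set.mem_setOf_eq, ConnectedComponent.mem_supp_iff, ConnectedComponent.eq]
  exact ⟨fun h => h.symm, fun h => h.symm⟩

/-! ### Walk arguments -/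

lemma reach_closed {G : SimpleGraph V} {S : Set V}
    (hcl : ∀ ⦃x y : V⦄, G.Adj x y → x ∈ S → y ∈ S) {x y : V}
    (hx : x ∈ S) (h : G.Reachable x y) : y ∈ S := by
  obtain ⟨w⟩ := h
  induction w with
  | nil => exact hx
  | cons ha _ ih => exact ih (hcl ha hx)

lemma exists_cross {G : SimpleGraph V} {S : Set V} {x y : V}
    (h : G.Reachable x y) (hx : x ∈ S) (hy : y ∉ S) :
    ∃ p q, G.Adj p q ∧ p ∈ S ∧ q ∉ S ∧ G.Reachable x p ∧ G.Reachable x q := by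
  obtain ⟨w⟩ := h
  induction w with
  | nil => exact absurd hx hy
  | @cons a b c ha w ih =>
    by_cases hb : b ∈ S
    · obtain ⟨p, q, h1, h2, h3, h4, h5⟩ := ih hb hy
      exact ⟨p, q, h1, h2, h3, ha.reachable.trans h4, ha.reachable.trans h5⟩
    · exact ⟨a, b, ha, hx, hb, Reachable.refl a, ha.reachable⟩

lemma IsCompOf.of_le {G G' : SimpleGraph V} {S : Set V} (h : IsCompOf G S) (hle : G ≤ G')
    (hcl : ∀ ⦃x y : V⦄, G'.Adj x y → x ∈ S → y ∈ S) : IsCompOf G' S := by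
  obtain ⟨x, hx, hS⟩ := h
  refine ⟨x, hx, ?_⟩
  apply Set.Subset.antisymm
  · intro y hy
    rw [hS] at hy
    exact (hy : G.Reachable x y).mono hle
  · intro y hy
    exact reach_closed hcl hx hy

end KronProof

namespace KronProof

open Set SimpleGraph

variable {V : Type*} {Θ : SimpleGraph V} {P : Set (Sym2 V) → Prop}

lemma cutBdry_elim' {S : Set V} {e : Sym2 V} (he : e ∈ cutBdry Θ S) :
    ∃ p q, Θ.Adj p q ∧ p ∈ S ∧ q ∉ S ∧ e = s(p, q) := by
  obtain ⟨hE, p, q, hpq, hp, hq⟩ := he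
  rw [hpq] at hE
  exact ⟨p, q, hE, hp, hq, hpq⟩

lemma bdry_subset_deleted {F : Set (Sym2 V)} {S : Set V}
    (h : IsCompOf (Θ.deleteEdges F) S) : cutBdry Θ S ⊆ F := by
  intro e he
  obtain ⟨p, q, hadj, hp, hq, rfl⟩ := cutBdry_elim' he
  by_contra hF
  exact hq (h.adj_mem hp (deleteEdges_adj_of_not_mem hadj hF))

lemma side_iff_of_del_adj {B : Set (Sym2 V)} {C : Set V} (hBC : cutBdry Θ C ⊆ B)
    {x y : V} (h : (Θ.deleteEdges B).Adj x y) : (x ∈ C ↔ y ∈ C) := by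
  rw [SimpleGraph.deleteEdges_adj] at h
  exact side_iff_of_not_bdry (fun hmem => h.2 (hBC hmem)) h.1

lemma bdry_inter_subset (Θ : SimpleGraph V) (A B' : Set V) :
    cutBdry Θ (A ∩ B') ⊆ cutBdry Θ A ∪ cutBdry Θ B' := by
  intro e he
  obtain ⟨p, q, hadj, hp, hq, rfl⟩ := cutBdry_elim' he
  by_cases hqa : q ∈ A
  · exact Or.inr (mem_cutBdry_of hadj hp.2 (fun hqb => hq ⟨hqa, hqb⟩))
  · exact Or.inl (mem_cutBdry_of hadj hp.1 hqa)

lemma exists_exit (hconn : Θ.Connected) {S : Set V} (hS : S.Nonempty) (hS' : Sᶜ.Nonempty) :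
    ∃ p q, Θ.Adj p q ∧ p ∈ S ∧ q ∉ S := by
  obtain ⟨x, hx⟩ := hS
  obtain ⟨y, hy⟩ := hS'
  obtain ⟨p, q, h, hp, hq, -, -⟩ := exists_cross (hconn.preconnected x y) hx hy
  exact ⟨p, q, h, hp, hq⟩

lemma cutBdry_nonempty (hconn : Θ.Connected) {S : Set V} (hS : S.Nonempty)
    (hS' : Sᶜ.Nonempty) : (cutBdry Θ S).Nonempty := by
  obtain ⟨p, q, h, hp, hq⟩ := exists_exit hconn hS hS'
  exact ⟨s(p, q), mem_cutBdry_of h hp hq⟩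

lemma sym2_carrier_finite (e : Sym2 V) : {v : V | v ∈ e}.Finite := by
  induction e with
  | _ a b =>
    have : {v : V | v ∈ s(a, b)} = {a, b} := by
      ext v; simp [Sym2.mem_iff]
    rw [this]
    exact (Set.finite_singleton a).insert b |>.subset (by simp [Set.pair_comm])

/-- The set of endpoints of a finite edge set is finite. -/
lemma endpoints_finite {B : Set (Sym2 V)} (hB : B.Finite) :
    {v : V | ∃ e ∈ B, v ∈ e}.Finite := by
  have : {v : V | ∃ e ∈ B, v ∈ e} = ⋃ e ∈ B, {v : V | v ∈ e} := by
    ext v; simp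
  rw [this]
  exact hB.biUnion (fun e _ => sym2_carrier_finite e)

lemma exists_infinite_comp (hconn : Θ.Connected) {B : Set (Sym2 V)} (hB : B.Finite)
    {S : Set V} (hS : S.Infinite) (hS' : Sᶜ.Nonempty)
    (hcl : ∀ ⦃x y : V⦄, (Θ.deleteEdges B).Adj x y → x ∈ S → y ∈ S) :
    ∃ X, X ⊆ S ∧ X.Infinite ∧ IsCompOf (Θ.deleteEdges B) X := by
  classical
  set G := Θ.deleteEdges B with hG
  have hcomp_sub : ∀ x ∈ S, {y | G.Reachable x y} ⊆ S := by
    intro x hx y hy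
    exact reach_closed hcl hx hy
  by_cases hex : ∃ x ∈ S, {y | G.Reachable x y}.Infinite
  · obtain ⟨x, hx, hinf⟩ := hex
    exact ⟨_, hcomp_sub x hx, hinf, isCompOf_class G x⟩
  · push_neg at hex
    exfalso
    set Vb := {v : V | ∃ e ∈ B, v ∈ e} with hVb
    have hVbfin : Vb.Finite := endpoints_finite hB
    have hwit : ∀ x ∈ S, ∃ w ∈ Vb ∩ S, x ∈ {y | G.Reachable w y} := by
      intro x hx
      obtain ⟨y, hy⟩ := hS'
      have hynot : y ∉ {y | G.Reachable x y} := fun hc => hy (hcomp_sub x hx hc)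
      obtain ⟨p, q, hadj, hp, hq, -, -⟩ :=
        exists_cross (hconn.preconnected x y) (by exact Reachable.refl x : x ∈ {y | G.Reachable x y}) hynot
      have hpq : s(p, q) ∈ B := by
        by_contra hpqB
        exact hq (Reachable.trans hp (deleteEdges_adj_of_not_mem hadj hpqB).reachable)
      refine ⟨p, ⟨⟨s(p, q), hpq, by simp⟩, hcomp_sub x hx hp⟩, ?_⟩
      exact (hp : G.Reachable x p).symm
    have hcover : S ⊆ ⋃ w ∈ Vb ∩ S, {y | G.Reachable w y} := by
      intro x hx
      obtain ⟨w, hw, hxw⟩ := hwit x hx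
      exact Set.mem_biUnion hw hxw
    have : S.Finite := by
      refine Set.Finite.subset ?_ hcover
      exact (hVbfin.inter_of_left S).biUnion (fun w hw => (hex w hw.2))
    exact hS this

lemma isPCut_of_comp
    (hsub : ∀ F F' : Set (Sym2 V), F.Finite → F' ⊆ F → P F → P F')
    {B : Set (Sym2 V)} (hP : P B) (hB : B.Finite) (hBE : B ⊆ Θ.edgeSet)
    {X Y : Set V} (hX : IsCompOf (Θ.deleteEdges B) X) (hXinf : X.Infinite)
    (hY : IsCompOf (Θ.deleteEdges B) Y) (hYinf : Y.Infinite) (hXY : X ≠ Y) :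
    IsPCut Θ P X := by
  obtain ⟨K, hK⟩ := hX.exists_supp
  obtain ⟨L, hL⟩ := hY.exists_supp
  have hKL : K ≠ L := by
    rintro rfl
    exact hXY (hK.trans hL.symm)
  have hnc : ¬(Θ.deleteEdges B).Connected := by
    intro hc
    obtain ⟨x, hx⟩ := hXinf.nonempty
    obtain ⟨y, hy⟩ := hYinf.nonempty
    have : y ∈ X := hX.reach_mem hx (hc.preconnected x y)
    have hd := hX.disjoint hY hXY
    rw [Set.eq_empty_iff_forall_notMem] at hd
    exact hd y ⟨this, hy⟩
  constructor
  · exact ⟨B, ⟨hB, hBE, hnc, K, L, hKL, hK ▸ hXinf, hL ▸ hYinf⟩, K, hK ▸ hXinf, hK⟩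
  · exact hsub B _ hB (bdry_subset_deleted hX) hP

/-- Structural facts about a narrow cut: deleting its boundary leaves exactly the two
components `C` and `Cᶜ`, both infinite. -/
def TwoComp (Θ : SimpleGraph V) (C : Set V) : Prop :=
  (cutBdry Θ C).Finite ∧ C.Infinite ∧ Cᶜ.Infinite ∧
  IsCompOf (Θ.deleteEdges (cutBdry Θ C)) C ∧ IsCompOf (Θ.deleteEdges (cutBdry Θ C)) Cᶜ

end KronProof

namespace KronProof

open Set SimpleGraph

variable {V : Type*} {Θ : SimpleGraph V} {P : Set (Sym2 V) → Prop}

lemma narrow_twoComp (hconn : Θ.Connected)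
    (hsub : ∀ F F' : Set (Sym2 V), F.Finite → F' ⊆ F → P F → P F')
    {C : Set V} (hN : IsPNarrow Θ P C) : TwoComp Θ C := by
  classical
  obtain ⟨⟨⟨F, ⟨hFfin, hFE, hFdis, K1, L1, hKL1, hK1inf, hL1inf⟩, K₀, hK₀inf, hCsupp⟩, hPC⟩,
    hmin⟩ := hN
  have hC₀ : IsCompOf (Θ.deleteEdges F) C := hCsupp ▸ isCompOf_supp K₀
  have hCinf : C.Infinite := hCsupp ▸ hK₀inf
  have hdF : cutBdry Θ C ⊆ F := bdry_subset_deleted hC₀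
  have hdfin : (cutBdry Θ C).Finite := hFfin.subset hdF
  set G := Θ.deleteEdges (cutBdry Θ C) with hGdef
  have hle : Θ.deleteEdges F ≤ G := SimpleGraph.deleteEdges_anti hdF
  -- C is a component of Θ − ∂C
  have hCcomp : IsCompOf G C := by
    refine hC₀.of_le hle ?_
    intro x y hadj hx
    exact (side_iff_of_del_adj (Set.Subset.refl _) hadj).1 hx
  -- Cᶜ is infinite
  have hCcinf : Cᶜ.Infinite := by
    have : ∃ M : (Θ.deleteEdges F).ConnectedComponent, M ≠ K₀ ∧ M.supp.Infinite := by
      by_cases h : K1 = K₀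
      · exact ⟨L1, by rw [← h]; exact hKL1.symm, hL1inf⟩
      · exact ⟨K1, h, hK1inf⟩
    obtain ⟨M, hMne, hMinf⟩ := this
    refine hMinf.mono ?_
    intro x hx
    intro hxC
    rw [hCsupp] at hxC
    rw [ConnectedComponent.mem_supp_iff] at hx hxC
    exact hMne (hx ▸ hxC ▸ rfl)
  -- Cᶜ is closed under G-adjacency
  have hCccl : ∀ ⦃x y : V⦄, G.Adj x y → x ∈ Cᶜ → y ∈ Cᶜ := by
    intro x y hadj hx
    intro hy
    exact hx ((side_iff_of_del_adj (Set.Subset.refl _) hadj).2 hy)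
  -- there is an infinite component W ⊆ Cᶜ
  obtain ⟨W, hWsub, hWinf, hWcomp⟩ :=
    exists_infinite_comp hconn hdfin hCcinf (by rw [compl_compl]; exact hCinf.nonempty) hCccl
  -- every component of G inside Cᶜ is infinite (absorb argument)
  have hNoFin : ∀ W', IsCompOf G W' → W' ⊆ Cᶜ → W'.Infinite := by
    intro W' hW'c hW'sub
    by_contra hfin
    have hW'fin : W'.Finite := Set.not_infinite.mp hfin
    have hWne : W'.Nonempty := hW'c.nonempty
    -- edges leaving W' in Θ go to C
    have hWC : ∀ x y, x ∈ W' → Θ.Adj x y → y ∉ W' → y ∈ C := by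
      intro x y hx hadj hy
      by_contra hyC
      have hnb : s(x, y) ∉ cutBdry Θ C :=
        not_mem_cutBdry_out (fun h => (hW'sub hx) h) hyC
      exact hy (hW'c.adj_mem hx (deleteEdges_adj_of_not_mem hadj hnb))
    have hdWsub : cutBdry Θ W' ⊆ cutBdry Θ C := bdry_subset_deleted hW'c
    have hW'V : W'ᶜ.Nonempty := by
      obtain ⟨c, hc⟩ := hCinf.nonempty
      exact ⟨c, fun hcW => (hW'sub hcW) hc⟩
    have hdWne : (cutBdry Θ W').Nonempty := cutBdry_nonempty hconn hWne hW'V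
    set C' := C ∪ W' with hC'def
    have hWdisjC : ∀ z ∈ W', z ∉ C := fun z hz => hW'sub hz
    -- boundary of C'
    have hbdry : cutBdry Θ C' = cutBdry Θ C \ cutBdry Θ W' := by
      ext e
      constructor
      · intro he
        obtain ⟨p, q, hadj, hp, hq, rfl⟩ := cutBdry_elim' he
        rcases hp with hpC | hpW
        · have hqC : q ∉ C := fun h => hq (Or.inl h)
          refine ⟨mem_cutBdry_of hadj hpC hqC, ?_⟩
          exact not_mem_cutBdry_out (hWdisjC p · hpC) (fun h => hq (Or.inr h))
        · exact absurd (hWC p q hpW hadj (fun h => hq (Or.inr h))) (fun h => hq (Or.inl h))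
      · rintro ⟨he, hne⟩
        obtain ⟨p, q, hadj, hp, hq, rfl⟩ := cutBdry_elim' he
        have hqW : q ∉ W' := by
          intro hqW'
          apply hne
          rw [Sym2.eq_swap]
          exact mem_cutBdry_of hadj.symm hqW' (fun hpW => hWdisjC p hpW hp)
        exact mem_cutBdry_of hadj (Or.inl hp) (fun h => h.elim hq hqW)
    have hssub : cutBdry Θ C' ⊂ cutBdry Θ C := by
      rw [hbdry]
      rw [Set.ssubset_iff_of_subset Set.diff_subset]
      obtain ⟨g, hg⟩ := hdWne
      exact ⟨g, hdWsub hg, fun h => h.2 hg⟩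
    have hlt : (cutBdry Θ C').ncard < (cutBdry Θ C).ncard := Set.ncard_lt_ncard hssub hdfin
    set G' := Θ.deleteEdges (cutBdry Θ C') with hG'def
    have hle' : G ≤ G' := SimpleGraph.deleteEdges_anti (hbdry ▸ Set.diff_subset)
    -- C ∪ W' is a component of Θ − ∂C'
    have hC'comp : IsCompOf G' C' := by
      obtain ⟨x₀, hx₀⟩ := hCinf.nonempty
      refine ⟨x₀, Or.inl hx₀, ?_⟩
      apply Set.Subset.antisymm
      · rintro y (hyC | hyW)
        · exact ((hCcomp.reach_of_mem hx₀ hyC).mono hle' : G'.Reachable x₀ y)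
        · obtain ⟨g, hg⟩ := hdWne
          obtain ⟨p, q, hadj, hp, hq, rfl⟩ := cutBdry_elim' hg
          have hqC : q ∈ C := hWC p q hp hadj hq
          have hGadj : G'.Adj q p := by
            apply deleteEdges_adj_of_not_mem hadj.symm
            rw [hbdry]
            intro hmem
            exact hmem.2 (by rw [Sym2.eq_swap]; exact mem_cutBdry_of hadj hp hq)
          have h1 : G'.Reachable x₀ q := (hCcomp.reach_of_mem hx₀ hqC).mono hle'
          have h2 : G'.Reachable p y := (hW'c.reach_of_mem hp hyW).mono hle'
          exact h1.trans (hGadj.reachable.trans h2)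
      · intro y hy
        refine reach_closed ?_ (Or.inl hx₀) hy
        intro x y hadj hx
        by_contra hyn
        have hΘadj : Θ.Adj x y := (SimpleGraph.deleteEdges_adj.mp hadj).1
        have hynB : s(x, y) ∉ cutBdry Θ C' := (SimpleGraph.deleteEdges_adj.mp hadj).2
        rcases hx with hxC | hxW
        · have hyC : y ∉ C := fun h => hyn (Or.inl h)
          apply hynB
          rw [hbdry]
          refine ⟨mem_cutBdry_of hΘadj hxC hyC, ?_⟩
          exact not_mem_cutBdry_out (hWdisjC x · hxC) (fun h => hyn (Or.inr h))
        · exact hyn (Or.inl (hWC x y hxW hΘadj (fun h => hyn (Or.inr h))))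
    -- W is still a component of Θ − ∂C'
    have hWW' : W ≠ W' := fun h => hfin (h ▸ hWinf)
    have hWW'disj : W ∩ W' = ∅ := hWcomp.disjoint hW'c hWW'
    have hWcomp' : IsCompOf G' W := by
      refine hWcomp.of_le hle' ?_
      intro x y hadj hx
      by_contra hyn
      have hΘadj : Θ.Adj x y := (SimpleGraph.deleteEdges_adj.mp hadj).1
      have hynB : s(x, y) ∉ cutBdry Θ C' := (SimpleGraph.deleteEdges_adj.mp hadj).2
      by_cases hC : s(x, y) ∈ cutBdry Θ C
      · have hW'y : s(x, y) ∈ cutBdry Θ W' := by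
          by_contra hk
          exact hynB (hbdry ▸ ⟨hC, hk⟩)
        obtain ⟨hadj', hcases⟩ := mem_cutBdry_elim hW'y (rfl : s(x,y) = s(x,y))
        have hxW' : x ∉ W' := by
          intro h
          rw [Set.eq_empty_iff_forall_notMem] at hWW'disj
          exact hWW'disj x ⟨hx, h⟩
        have hyW' : y ∈ W' := by
          rcases hcases with ⟨h1, _⟩ | ⟨h1, h2⟩
          · exact absurd h1 hxW'
          · exact h1
        obtain ⟨-, hcases2⟩ := mem_cutBdry_elim hC (rfl : s(x,y) = s(x,y))
        have hxCc : x ∉ C := hWsub hx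
        rcases hcases2 with ⟨h1, _⟩ | ⟨h1, _⟩
        · exact hxCc h1
        · exact (hW'sub hyW') h1
      · exact hyn (hWcomp.adj_mem hx (deleteEdges_adj_of_not_mem hΘadj hC))
    -- C' is a P-cut with smaller boundary: contradiction
    have hC'P : IsPCut Θ P C' := by
      refine isPCut_of_comp hsub
        (hsub _ _ hdfin (hbdry ▸ Set.diff_subset) hPC)
        (hdfin.subset (hbdry ▸ Set.diff_subset))
        (cutBdry_subset_edgeSet Θ C') hC'comp
        (hCinf.mono Set.subset_union_left) hWcomp' hWinf ?_
      intro h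
      obtain ⟨x, hx⟩ := hCinf.nonempty
      have hxW : x ∈ W := by
        rw [← h]
        exact Or.inl hx
      exact hWsub hxW hx
    exact absurd (hmin C' hC'P) (by omega)
  -- Cᶜ is a single component
  have hCcc : IsCompOf G Cᶜ := by
    have hQeq : ∀ y ∈ Cᶜ, {z | G.Reachable y z} = W := by
      intro y hy
      set Q := {z | G.Reachable y z} with hQdef
      have hQcomp : IsCompOf G Q := isCompOf_class G y
      have hQsub : Q ⊆ Cᶜ := fun z hz => reach_closed hCccl hy hz
      have hQinf : Q.Infinite := hNoFin Q hQcomp hQsub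
      by_contra hne
      -- both Q and W are P-cuts with boundary = ∂C, sharing the Cᶜ-endpoint of
      -- an edge of ∂C: contradiction with disjointness
      have hbd : ∀ W'', IsCompOf G W'' → W'' ⊆ Cᶜ → W''.Infinite →
          cutBdry Θ W'' = cutBdry Θ C := by
        intro W'' hc hsubc hinf
        have hPcut : IsPCut Θ P W'' := isPCut_of_comp hsub hPC hdfin
          (cutBdry_subset_edgeSet Θ C) hc hinf hCcomp hCinf
          (by
            intro h
            obtain ⟨x, hx⟩ := hCinf.nonempty
            have hxW : x ∈ W'' := by rw [h]; exact hx
            exact (hsubc hxW) hx)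
        exact Set.eq_of_subset_of_ncard_le (bdry_subset_deleted hc) (hmin W'' hPcut) hdfin
      obtain ⟨p, q, hadj, hp, hq⟩ := exists_exit hconn hCinf.nonempty hCcinf.nonempty
      have he : s(p, q) ∈ cutBdry Θ C := mem_cutBdry_of hadj hp hq
      have heQ : s(p, q) ∈ cutBdry Θ Q := (hbd Q hQcomp hQsub hQinf).symm ▸ he
      have heW : s(p, q) ∈ cutBdry Θ W := (hbd W hWcomp hWsub hWinf).symm ▸ he
      have hqQ : q ∈ Q := by
        rcases (mem_cutBdry_elim heQ rfl).2 with ⟨h1, -⟩ | ⟨h1, -⟩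
        · exact absurd hp (hQsub h1)
        · exact h1
      have hqW : q ∈ W := by
        rcases (mem_cutBdry_elim heW rfl).2 with ⟨h1, -⟩ | ⟨h1, -⟩
        · exact absurd hp (hWsub h1)
        · exact h1
      exact hne (hQcomp.eq_of_mem hWcomp hqQ hqW)
    obtain ⟨y₀, hy₀⟩ := hCcinf.nonempty
    refine ⟨y₀, hy₀, ?_⟩
    apply Set.Subset.antisymm
    · intro z hz
      have : z ∈ W := (hQeq z hz) ▸ (Reachable.refl z : G.Reachable z z)
      rw [← hQeq y₀ hy₀] at this
      exact (isCompOf_class G y₀).reach_of_mem (Reachable.refl y₀) this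
    · intro z hz
      exact reach_closed hCccl hy₀ hz
  exact ⟨hdfin, hCinf, hCcinf, hCcomp, hCcc⟩

end KronProof

namespace KronProof

open Set SimpleGraph

variable {V : Type*} {Θ : SimpleGraph V} {P : Set (Sym2 V) → Prop}

lemma TwoComp.compl {C : Set V} (h : TwoComp Θ C) : TwoComp Θ Cᶜ := by
  obtain ⟨h1, h2, h3, h4, h5⟩ := h
  unfold TwoComp
  rw [cutBdry_compl, compl_compl]
  exact ⟨h1, h3, h2, h5, h4⟩

lemma narrow_compl (hconn : Θ.Connected)
    (hsub : ∀ F F' : Set (Sym2 V), F.Finite → F' ⊆ F → P F → P F')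
    {C : Set V} (hN : IsPNarrow Θ P C) : IsPNarrow Θ P Cᶜ := by
  obtain ⟨hfin, hCinf, hCcinf, hCcomp, hCccomp⟩ := narrow_twoComp hconn hsub hN
  obtain ⟨⟨hcut, hPC⟩, hmin⟩ := hN
  have hne : Cᶜ ≠ C := by
    intro h
    obtain ⟨x, hx⟩ := hCinf.nonempty
    have : x ∈ Cᶜ := by rw [h]; exact hx
    exact this hx
  refine ⟨isPCut_of_comp hsub hPC hfin (cutBdry_subset_edgeSet Θ C) hCccomp hCcinf
    hCcomp hCinf hne, ?_⟩
  intro D hD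
  rw [cutBdry_compl]
  exact hmin D hD

lemma closed_of_bdry_subset {B : Set (Sym2 V)} {S : Set V} (hB : cutBdry Θ S ⊆ B) :
    ∀ ⦃x y : V⦄, (Θ.deleteEdges B).Adj x y → x ∈ S → y ∈ S := by
  intro x y hadj hx
  exact (side_iff_of_del_adj hB hadj).1 hx

/-! ### Nested lemmas -/

lemma nested_refl (C : Set V) : Nested C C := Or.inl (Set.Subset.refl C)

lemma nested_comm {C D : Set V} (h : Nested C D) : Nested D C := by
  rcases h with h | h | h | h
  · exact Or.inr (Or.inr (Or.inr (Set.compl_subset_compl.2 h)))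
  · exact Or.inr (Or.inl (Set.subset_compl_comm.1 h))
  · exact Or.inr (Or.inr (Or.inl (Set.compl_subset_comm.1 h)))
  · exact Or.inl (Set.compl_subset_compl.1 h)

lemma nested_compl_right {C D : Set V} : Nested C Dᶜ ↔ Nested C D := by
  unfold Nested
  rw [compl_compl]
  tauto

lemma nested_compl_left {C D : Set V} : Nested Cᶜ D ↔ Nested C D := by
  unfold Nested
  rw [compl_compl]
  tauto

lemma not_nested_corners {C D : Set V} (h : ¬ Nested C D) :
    (C ∩ D).Nonempty ∧ (C ∩ Dᶜ).Nonempty ∧ (Cᶜ ∩ D).Nonempty ∧ (Cᶜ ∩ Dᶜ).Nonempty := by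
  unfold Nested at h
  push_neg at h
  obtain ⟨h1, h2, h3, h4⟩ := h
  rw [Set.not_subset] at h1 h2 h3 h4
  obtain ⟨x1, hx1, hx1'⟩ := h2
  obtain ⟨x2, hx2, hx2'⟩ := h1
  obtain ⟨x3, hx3, hx3'⟩ := h4
  obtain ⟨x4, hx4, hx4'⟩ := h3
  exact ⟨⟨x1, hx1, by simpa using hx1'⟩, ⟨x2, hx2, hx2'⟩,
    ⟨x3, hx3, by simpa using hx3'⟩, ⟨x4, hx4, hx4'⟩⟩

/-! ### Corners -/

lemma corner_infinite {S T : Set V} (hS : S.Infinite) (hfin : ¬ (S ∩ T).Infinite) :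
    (S ∩ Tᶜ).Infinite := by
  refine (hS.diff (Set.not_infinite.mp hfin)).mono ?_
  intro x hx
  exact ⟨hx.1, fun hxT => hx.2 ⟨hx.1, hxT⟩⟩

lemma exists_infinite_diag {a b : Set V} (ha2 : TwoComp Θ a) (hb2 : TwoComp Θ b) :
    ((a ∩ b).Infinite ∧ (aᶜ ∩ bᶜ).Infinite) ∨ ((a ∩ bᶜ).Infinite ∧ (aᶜ ∩ b).Infinite) := by
  obtain ⟨-, hainf, hacinf, -, -⟩ := ha2
  obtain ⟨-, hbinf, hbcinf, -, -⟩ := hb2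
  by_cases h1 : (a ∩ b).Infinite
  · by_cases h4 : (aᶜ ∩ bᶜ).Infinite
    · exact Or.inl ⟨h1, h4⟩
    · right
      constructor
      · have : (bᶜ ∩ aᶜ).Infinite → False := fun h => h4 (by rwa [Set.inter_comm] at h)
        have h' := corner_infinite hbcinf this
        rw [compl_compl, Set.inter_comm] at h'
        exact h'
      · have : (aᶜ ∩ bᶜ).Infinite → False := h4
        have h' := corner_infinite hacinf this
        rw [compl_compl] at h'
        exact h'
  · right
    constructor
    · have : (a ∩ b).Infinite → False := h1
      exact corner_infinite hainf this
    · have : (b ∩ a).Infinite → False := fun h => h1 (by rwa [Set.inter_comm] at h)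
      have h' := corner_infinite hbinf this
      rw [Set.inter_comm] at h'
      exact h'

lemma bdry_corner_subset (Θ : SimpleGraph V) (a b : Set V) :
    cutBdry Θ (a ∩ b) ⊆ cutBdry Θ a ∪ cutBdry Θ b := bdry_inter_subset Θ a b

lemma bdry_corner_subset' (Θ : SimpleGraph V) (a b : Set V) :
    cutBdry Θ (aᶜ ∩ bᶜ) ⊆ cutBdry Θ a ∪ cutBdry Θ b := by
  have h := bdry_inter_subset Θ aᶜ bᶜ
  rwa [cutBdry_compl, cutBdry_compl] at h

/-- Main corner construction: given two narrow cuts whose "main diagonal" corners are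
both infinite, both diagonal corners contain infinite components of
`Θ − (∂a ∪ ∂b)` which are themselves narrow cuts. -/
lemma corner_comps (hconn : Θ.Connected)
    (hsub : ∀ F F' : Set (Sym2 V), F.Finite → F' ⊆ F → P F → P F')
    (hunion : ∀ F F' : Set (Sym2 V), F.Finite → F'.Finite → P F → P F' → P (F ∪ F'))
    {a b : Set V} (ha : IsPNarrow Θ P a) (hb : IsPNarrow Θ P b)
    (ha2 : TwoComp Θ a) (hb2 : TwoComp Θ b)
    (hK : (a ∩ b).Infinite) (hK' : (aᶜ ∩ bᶜ).Infinite) :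
    ∃ X X' : Set V,
      X ⊆ a ∩ b ∧ X' ⊆ aᶜ ∩ bᶜ ∧ X.Infinite ∧ X'.Infinite ∧
      IsCompOf (Θ.deleteEdges (cutBdry Θ a ∪ cutBdry Θ b)) X ∧
      IsCompOf (Θ.deleteEdges (cutBdry Θ a ∪ cutBdry Θ b)) X' ∧
      IsPNarrow Θ P X ∧ IsPNarrow Θ P X' ∧
      cutBdry Θ X ∩ cutBdry Θ X' ⊆ cutBdry Θ a ∩ cutBdry Θ b := by
  classical
  obtain ⟨hafin, hainf, hacinf, hacomp, haccomp⟩ := ha2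
  obtain ⟨hbfin, hbinf, hbcinf, hbcomp, hbccomp⟩ := hb2
  set B := cutBdry Θ a ∪ cutBdry Θ b with hBdef
  have hBfin : B.Finite := hafin.union hbfin
  have hBE : B ⊆ Θ.edgeSet := by
    rintro e (he | he) <;> exact cutBdry_subset_edgeSet Θ _ he
  have hPB : P B := hunion _ _ hafin hbfin ha.1.2 hb.1.2
  -- infinite components in the diagonal corners
  obtain ⟨X, hXsub, hXinf, hXcomp⟩ :=
    exists_infinite_comp hconn hBfin hK
      (by
        obtain ⟨x, hx⟩ := hacinf.nonempty
        exact ⟨x, fun hc => hx hc.1⟩)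
      (closed_of_bdry_subset (bdry_corner_subset Θ a b))
  obtain ⟨X', hX'sub, hX'inf, hX'comp⟩ :=
    exists_infinite_comp hconn hBfin hK'
      (by
        obtain ⟨x, hx⟩ := hainf.nonempty
        exact ⟨x, fun hc => hc.1 hx⟩)
      (closed_of_bdry_subset (bdry_corner_subset' Θ a b))
  have hdisj : ∀ z, z ∈ X → z ∈ X' → False := by
    intro z hz hz'
    exact (hX'sub hz').1 (hXsub hz).1
  have hne : X ≠ X' := by
    intro h
    obtain ⟨x, hx⟩ := hXinf.nonempty
    exact hdisj x hx (h ▸ hx)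
  -- they are P-cuts
  have hXP : IsPCut Θ P X := isPCut_of_comp hsub hPB hBfin hBE hXcomp hXinf hX'comp hX'inf hne
  have hX'P : IsPCut Θ P X' := isPCut_of_comp hsub hPB hBfin hBE hX'comp hX'inf hXcomp hXinf
    (Ne.symm hne)
  -- boundary counting
  have hXB : cutBdry Θ X ⊆ B := bdry_subset_deleted hXcomp
  have hX'B : cutBdry Θ X' ⊆ B := bdry_subset_deleted hX'comp
  have hIntSub : cutBdry Θ X ∩ cutBdry Θ X' ⊆ cutBdry Θ a ∩ cutBdry Θ b := by
    rintro e ⟨heX, heX'⟩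
    obtain ⟨p, q, hadj, hp, hq, rfl⟩ := cutBdry_elim' heX
    have hq' : q ∈ X' := by
      rcases (mem_cutBdry_elim heX' rfl).2 with ⟨h1, -⟩ | ⟨h1, -⟩
      · exact absurd ((hX'sub h1).1) (fun hc => hc (hXsub hp).1)
      · exact h1
    have hpa : p ∈ a := (hXsub hp).1
    have hpb : p ∈ b := (hXsub hp).2
    have hqa : q ∉ a := (hX'sub hq').1
    have hqb : q ∉ b := (hX'sub hq').2
    exact ⟨mem_cutBdry_of hadj hpa hqa, mem_cutBdry_of hadj hpb hqb⟩
  have hcard : (cutBdry Θ X).ncard + (cutBdry Θ X').ncard ≤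
      (cutBdry Θ a).ncard + (cutBdry Θ b).ncard := by
    have hXfin : (cutBdry Θ X).Finite := hBfin.subset hXB
    have hX'fin : (cutBdry Θ X').Finite := hBfin.subset hX'B
    have e1 : (cutBdry Θ X ∪ cutBdry Θ X').ncard + (cutBdry Θ X ∩ cutBdry Θ X').ncard =
        (cutBdry Θ X).ncard + (cutBdry Θ X').ncard :=
      Set.ncard_union_add_ncard_inter _ _ hXfin hX'fin
    have e2 : (cutBdry Θ a ∪ cutBdry Θ b).ncard + (cutBdry Θ a ∩ cutBdry Θ b).ncard =
        (cutBdry Θ a).ncard + (cutBdry Θ b).ncard :=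
      Set.ncard_union_add_ncard_inter _ _ hafin hbfin
    have le1 : (cutBdry Θ X ∪ cutBdry Θ X').ncard ≤ (cutBdry Θ a ∪ cutBdry Θ b).ncard :=
      Set.ncard_le_ncard (Set.union_subset hXB hX'B) hBfin
    have le2 : (cutBdry Θ X ∩ cutBdry Θ X').ncard ≤ (cutBdry Θ a ∩ cutBdry Θ b).ncard :=
      Set.ncard_le_ncard hIntSub (hafin.subset Set.inter_subset_left)
    omega
  have hXa : (cutBdry Θ a).ncard ≤ (cutBdry Θ X).ncard := ha.2 X hXP
  have hX'a : (cutBdry Θ a).ncard ≤ (cutBdry Θ X').ncard := ha.2 X' hX'P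
  have hXb : (cutBdry Θ b).ncard ≤ (cutBdry Θ X).ncard := hb.2 X hXP
  have hX'b : (cutBdry Θ b).ncard ≤ (cutBdry Θ X').ncard := hb.2 X' hX'P
  refine ⟨X, X', hXsub, hX'sub, hXinf, hX'inf, hXcomp, hX'comp, ⟨hXP, ?_⟩, ⟨hX'P, ?_⟩, hIntSub⟩
  · intro D hD
    have : (cutBdry Θ X).ncard ≤ (cutBdry Θ b).ncard := by omega
    exact this.trans (hb.2 D hD)
  · intro D hD
    have : (cutBdry Θ X').ncard ≤ (cutBdry Θ a).ncard := by omega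
    exact this.trans (ha.2 D hD)

end KronProof

namespace KronProof

open Set SimpleGraph

variable {V : Type*} {Θ : SimpleGraph V} {P : Set (Sym2 V) → Prop}

lemma mem_cutBdry_of' {C : Set V} {x y : V} (h : Θ.Adj x y) (hx : x ∉ C) (hy : y ∈ C) :
    s(x, y) ∈ cutBdry Θ C :=
  ⟨h, y, x, Sym2.eq_swap.symm, hy, hx⟩

lemma bdry_corner_subset'' (Θ : SimpleGraph V) (a b : Set V) :
    cutBdry Θ (a ∩ bᶜ) ⊆ cutBdry Θ a ∪ cutBdry Θ b := by
  have h := bdry_inter_subset Θ a bᶜ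
  rwa [cutBdry_compl] at h

lemma bdry_corner_subset''' (Θ : SimpleGraph V) (a b : Set V) :
    cutBdry Θ (aᶜ ∩ b) ⊆ cutBdry Θ a ∪ cutBdry Θ b := by
  have h := bdry_inter_subset Θ aᶜ b
  rwa [cutBdry_compl] at h

/-- If the boundaries of the diagonal component-cuts fill up `∂a ∪ ∂b` and `∂a ∩ ∂b`
exactly, then the corner `a ∩ b` is connected, i.e. equal to the component `X`. -/
lemma corner_eq_comp (hconn : Θ.Connected) {a b X X' : Set V}
    (hXcomp : IsCompOf (Θ.deleteEdges (cutBdry Θ a ∪ cutBdry Θ b)) X)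
    (hX'ne : X'.Nonempty)
    (hXsub : X ⊆ a ∩ b) (hX'sub : X' ⊆ aᶜ ∩ bᶜ)
    (hUeq : cutBdry Θ X ∪ cutBdry Θ X' = cutBdry Θ a ∪ cutBdry Θ b)
    (hIeq : cutBdry Θ X ∩ cutBdry Θ X' = cutBdry Θ a ∩ cutBdry Θ b) :
    a ∩ b = X := by
  classical
  set B := cutBdry Θ a ∪ cutBdry Θ b with hBdef
  set G := Θ.deleteEdges B with hGdef
  refine Set.Subset.antisymm ?_ hXsub
  intro x hx
  by_contra hxX
  set Q := {z | G.Reachable x z} with hQdef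
  have hcl : ∀ ⦃p q : V⦄, G.Adj p q → p ∈ a ∩ b → q ∈ a ∩ b :=
    closed_of_bdry_subset (bdry_corner_subset Θ a b)
  have hQsub : Q ⊆ a ∩ b := fun z hz => reach_closed hcl hx hz
  have hQX : Q ∩ X = ∅ := by
    refine (isCompOf_class G x).disjoint hXcomp ?_
    intro h
    exact hxX (h ▸ (Reachable.refl x : x ∈ Q))
  obtain ⟨w, hw⟩ := hX'ne
  have hwQ : w ∉ Q := fun hc => (hX'sub hw).1 (hQsub hc).1
  have hxQ : x ∈ Q := by exact Reachable.refl x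
  obtain ⟨p, q, hadj, hp, hq⟩ := exists_exit hconn ⟨x, hxQ⟩ ⟨w, hwQ⟩
  have hgB : s(p, q) ∈ B := by
    by_contra hgB
    exact hq (Reachable.trans hp (deleteEdges_adj_of_not_mem hadj hgB).reachable)
  have hnotin : ∀ e ∈ cutBdry Θ X, e = s(p,q) → False := by
    intro e he hrep
    rcases (mem_cutBdry_elim he hrep).2 with ⟨h1, -⟩ | ⟨h1, h2⟩
    · rw [Set.eq_empty_iff_forall_notMem] at hQX
      exact hQX p ⟨hp, h1⟩
    · -- q ∈ X : both endpoints in a ∩ b, contradicting s(p,q) ∈ B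
      have hpa : p ∈ a ∩ b := hQsub hp
      have hqa : q ∈ a ∩ b := hXsub h1
      rcases hgB with hg | hg
      · rcases (mem_cutBdry_elim hg rfl).2 with ⟨-, h4⟩ | ⟨-, h4⟩
        · exact h4 hqa.1
        · exact h4 hpa.1
      · rcases (mem_cutBdry_elim hg rfl).2 with ⟨-, h4⟩ | ⟨-, h4⟩
        · exact h4 hqa.2
        · exact h4 hpa.2
  have hgBX : s(p, q) ∈ cutBdry Θ X ∪ cutBdry Θ X' := by rw [hUeq]; exact hgB
  rcases hgBX with hg | hg
  · exact hnotin _ hg rfl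
  · -- s(p,q) ∈ ∂X' : its X'-endpoint must be q, so the edge crosses both boundaries
    have hqX' : q ∈ X' := by
      rcases (mem_cutBdry_elim hg rfl).2 with ⟨h1, -⟩ | ⟨h1, -⟩
      · exact absurd (hQsub hp).1 (hX'sub h1).1
      · exact h1
    have hgab : s(p, q) ∈ cutBdry Θ a ∩ cutBdry Θ b := by
      have hpa : p ∈ a ∩ b := hQsub hp
      have hqa : q ∈ aᶜ ∩ bᶜ := hX'sub hqX'
      exact ⟨mem_cutBdry_of hadj hpa.1 hqa.1, mem_cutBdry_of hadj hpa.2 hqa.2⟩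
    rw [← hIeq] at hgab
    exact hnotin _ hgab.1 rfl

/-- Key closure property: if two narrow cuts sharing the oriented boundary edge
`(u,v)` cross, then their intersection and union are again narrow. -/
lemma meet_narrow (hconn : Θ.Connected)
    (hsub : ∀ F F' : Set (Sym2 V), F.Finite → F' ⊆ F → P F → P F')
    (hunion : ∀ F F' : Set (Sym2 V), F.Finite → F'.Finite → P F → P F' → P (F ∪ F'))
    {u v : V} (hadj : Θ.Adj u v) {a b : Set V}
    (ha : IsPNarrow Θ P a) (hb : IsPNarrow Θ P b)
    (hua : u ∈ a) (hub : u ∈ b) (hva : v ∉ a) (hvb : v ∉ b)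
    (hnn : ¬ Nested a b) :
    IsPNarrow Θ P (a ∩ b) ∧ IsPNarrow Θ P (a ∪ b) := by
  classical
  have ha2 := narrow_twoComp hconn hsub ha
  have hb2 := narrow_twoComp hconn hsub hb
  obtain ⟨hafin, hainf, hacinf, hacomp, haccomp⟩ := ha2
  obtain ⟨hbfin, hbinf, hbcinf, hbcomp, hbccomp⟩ := hb2
  set B := cutBdry Θ a ∪ cutBdry Θ b with hBdef
  have hBfin : B.Finite := hafin.union hbfin
  have hBE : B ⊆ Θ.edgeSet := by
    rintro e (he | he) <;> exact cutBdry_subset_edgeSet Θ _ he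
  have hPB : P B := hunion _ _ hafin hbfin ha.1.2 hb.1.2
  have hea : s(u, v) ∈ cutBdry Θ a := mem_cutBdry_of hadj hua hva
  have heb : s(u, v) ∈ cutBdry Θ b := mem_cutBdry_of hadj hub hvb
  -- Step A: the off-diagonal corners cannot both be infinite
  have hstepA : ¬ ((a ∩ bᶜ).Infinite ∧ (aᶜ ∩ b).Infinite) := by
    rintro ⟨hM1, hM2⟩
    obtain ⟨Y1, hY1sub, hY1inf, hY1comp⟩ :=
      exists_infinite_comp hconn hBfin hM1
        (⟨u, fun hc => hc.2 hub⟩)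
        (closed_of_bdry_subset (bdry_corner_subset'' Θ a b))
    obtain ⟨Y2, hY2sub, hY2inf, hY2comp⟩ :=
      exists_infinite_comp hconn hBfin hM2
        (⟨u, fun hc => hc.1 hua⟩)
        (closed_of_bdry_subset (bdry_corner_subset''' Θ a b))
    have hne : Y1 ≠ Y2 := by
      intro h
      obtain ⟨z, hz⟩ := hY1inf.nonempty
      exact (hY2sub (h ▸ hz)).1 (hY1sub hz).1
    have hY1P : IsPCut Θ P Y1 := isPCut_of_comp hsub hPB hBfin hBE hY1comp hY1inf hY2comp hY2inf hne
    have hY2P : IsPCut Θ P Y2 := isPCut_of_comp hsub hPB hBfin hBE hY2comp hY2inf hY1comp hY1inf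
      (Ne.symm hne)
    have hY1B : cutBdry Θ Y1 ⊆ B := bdry_subset_deleted hY1comp
    have hY2B : cutBdry Θ Y2 ⊆ B := bdry_subset_deleted hY2comp
    have heY1 : s(u, v) ∉ cutBdry Θ Y1 := by
      intro hc
      rcases (mem_cutBdry_elim hc rfl).2 with ⟨h1, -⟩ | ⟨h1, -⟩
      · exact (hY1sub h1).2 hub
      · exact hva (hY1sub h1).1
    have heY2 : s(u, v) ∉ cutBdry Θ Y2 := by
      intro hc
      rcases (mem_cutBdry_elim hc rfl).2 with ⟨h1, -⟩ | ⟨h1, -⟩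
      · exact (hY2sub h1).1 hua
      · exact hvb (hY2sub h1).2
    have hIntSub : cutBdry Θ Y1 ∩ cutBdry Θ Y2 ⊆ cutBdry Θ a ∩ cutBdry Θ b := by
      rintro e ⟨he1, he2⟩
      obtain ⟨p, q, hadj', hp, hq, rfl⟩ := cutBdry_elim' he1
      have hq' : q ∈ Y2 := by
        rcases (mem_cutBdry_elim he2 rfl).2 with ⟨h1, -⟩ | ⟨h1, -⟩
        · exact absurd (hY1sub hp).1 (fun hc => (hY2sub h1).1 hc)
        · exact h1
      have hpA : p ∈ a ∩ bᶜ := hY1sub hp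
      have hqA : q ∈ aᶜ ∩ b := hY2sub hq'
      exact ⟨mem_cutBdry_of hadj' hpA.1 hqA.1, mem_cutBdry_of' hadj' hpA.2 hqA.2⟩
    -- counting
    have hY1fin : (cutBdry Θ Y1).Finite := hBfin.subset hY1B
    have hY2fin : (cutBdry Θ Y2).Finite := hBfin.subset hY2B
    have e1 : (cutBdry Θ Y1 ∪ cutBdry Θ Y2).ncard + (cutBdry Θ Y1 ∩ cutBdry Θ Y2).ncard =
        (cutBdry Θ Y1).ncard + (cutBdry Θ Y2).ncard :=
      Set.ncard_union_add_ncard_inter _ _ hY1fin hY2fin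
    have e2 : B.ncard + (cutBdry Θ a ∩ cutBdry Θ b).ncard =
        (cutBdry Θ a).ncard + (cutBdry Θ b).ncard := by
      rw [hBdef]
      exact Set.ncard_union_add_ncard_inter _ _ hafin hbfin
    have hU : cutBdry Θ Y1 ∪ cutBdry Θ Y2 ⊆ B \ {s(u,v)} := by
      intro e he
      refine ⟨(Set.union_subset hY1B hY2B) he, ?_⟩
      intro hc
      rw [Set.mem_singleton_iff] at hc
      subst hc
      rcases he with he | he
      · exact heY1 he
      · exact heY2 he
    have hI : cutBdry Θ Y1 ∩ cutBdry Θ Y2 ⊆ (cutBdry Θ a ∩ cutBdry Θ b) \ {s(u,v)} := by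
      intro e he
      refine ⟨hIntSub he, ?_⟩
      intro hc
      rw [Set.mem_singleton_iff] at hc
      subst hc
      exact heY1 he.1
    have c1 : (cutBdry Θ Y1 ∪ cutBdry Θ Y2).ncard ≤ (B \ {s(u,v)}).ncard :=
      Set.ncard_le_ncard hU (hBfin.diff)
    have c2 : (cutBdry Θ Y1 ∩ cutBdry Θ Y2).ncard ≤ ((cutBdry Θ a ∩ cutBdry Θ b) \ {s(u,v)}).ncard :=
      Set.ncard_le_ncard hI ((hafin.subset Set.inter_subset_left).diff)
    have heB : s(u,v) ∈ B := by rw [hBdef]; exact Or.inl hea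
    have d1 : (B \ {s(u,v)}).ncard = B.ncard - 1 :=
      Set.ncard_diff_singleton_of_mem heB
    have d2 : ((cutBdry Θ a ∩ cutBdry Θ b) \ {s(u,v)}).ncard = (cutBdry Θ a ∩ cutBdry Θ b).ncard - 1 :=
      Set.ncard_diff_singleton_of_mem (s := cutBdry Θ a ∩ cutBdry Θ b) ⟨hea, heb⟩
    have hpos1 : 1 ≤ B.ncard := (Set.ncard_pos hBfin).2 ⟨_, heB⟩
    have hpos2 : 1 ≤ (cutBdry Θ a ∩ cutBdry Θ b).ncard :=
      (Set.ncard_pos (hafin.subset Set.inter_subset_left)).2 ⟨_, ⟨hea, heb⟩⟩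
    have m1 : (cutBdry Θ a).ncard ≤ (cutBdry Θ Y1).ncard := ha.2 Y1 hY1P
    have m2 : (cutBdry Θ b).ncard ≤ (cutBdry Θ Y2).ncard := hb.2 Y2 hY2P
    omega
  -- Step B: the main diagonal corners are infinite
  have hdiag : (a ∩ b).Infinite ∧ (aᶜ ∩ bᶜ).Infinite := by
    rcases exists_infinite_diag ⟨hafin, hainf, hacinf, hacomp, haccomp⟩
      ⟨hbfin, hbinf, hbcinf, hbcomp, hbccomp⟩ with h | h
    · exact h
    · exact absurd h hstepA
  -- Step C: corner components
  obtain ⟨X, X', hXsub, hX'sub, hXinf, hX'inf, hXcomp, hX'comp, hXN, hX'N, hIntSub⟩ :=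
    corner_comps hconn hsub hunion ha hb ⟨hafin, hainf, hacinf, hacomp, haccomp⟩
      ⟨hbfin, hbinf, hbcinf, hbcomp, hbccomp⟩ hdiag.1 hdiag.2
  -- Step D: boundary equalities
  have hXB : cutBdry Θ X ⊆ B := bdry_subset_deleted hXcomp
  have hX'B : cutBdry Θ X' ⊆ B := bdry_subset_deleted hX'comp
  have hXfin : (cutBdry Θ X).Finite := hBfin.subset hXB
  have hX'fin : (cutBdry Θ X').Finite := hBfin.subset hX'B
  have hIfin : (cutBdry Θ a ∩ cutBdry Θ b).Finite := hafin.subset Set.inter_subset_left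
  have e1 : (cutBdry Θ X ∪ cutBdry Θ X').ncard + (cutBdry Θ X ∩ cutBdry Θ X').ncard =
      (cutBdry Θ X).ncard + (cutBdry Θ X').ncard :=
    Set.ncard_union_add_ncard_inter _ _ hXfin hX'fin
  have e2 : B.ncard + (cutBdry Θ a ∩ cutBdry Θ b).ncard =
      (cutBdry Θ a).ncard + (cutBdry Θ b).ncard := by
    rw [hBdef]
    exact Set.ncard_union_add_ncard_inter _ _ hafin hbfin
  have c1 : (cutBdry Θ X ∪ cutBdry Θ X').ncard ≤ B.ncard :=
    Set.ncard_le_ncard (Set.union_subset hXB hX'B) hBfin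
  have c2 : (cutBdry Θ X ∩ cutBdry Θ X').ncard ≤ (cutBdry Θ a ∩ cutBdry Θ b).ncard :=
    Set.ncard_le_ncard hIntSub hIfin
  have m1 : (cutBdry Θ a).ncard ≤ (cutBdry Θ X).ncard := ha.2 X hXN.1
  have m2 : (cutBdry Θ b).ncard ≤ (cutBdry Θ X').ncard := hb.2 X' hX'N.1
  have hUeq : cutBdry Θ X ∪ cutBdry Θ X' = B :=
    Set.eq_of_subset_of_ncard_le (Set.union_subset hXB hX'B) (by omega) hBfin
  have hIeq : cutBdry Θ X ∩ cutBdry Θ X' = cutBdry Θ a ∩ cutBdry Θ b :=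
    Set.eq_of_subset_of_ncard_le hIntSub (by omega) hIfin
  -- Step E: the corners are exactly the components
  have hE : a ∩ b = X :=
    corner_eq_comp hconn hXcomp hX'inf.nonempty hXsub hX'sub hUeq hIeq
  have hF : aᶜ ∩ bᶜ = X' := by
    have hcompl : cutBdry Θ aᶜ ∪ cutBdry Θ bᶜ = B := by rw [cutBdry_compl, cutBdry_compl]
    refine corner_eq_comp hconn (by rwa [hcompl]) hXinf.nonempty hX'sub
      (by rwa [compl_compl, compl_compl]) ?_ ?_
    · rw [cutBdry_compl, cutBdry_compl, Set.union_comm]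
      exact hUeq
    · rw [cutBdry_compl, cutBdry_compl, Set.inter_comm]
      exact hIeq
  constructor
  · rw [hE]; exact hXN
  · have : a ∪ b = (aᶜ ∩ bᶜ)ᶜ := by rw [Set.compl_inter, compl_compl, compl_compl]
    rw [this, hF]
    exact narrow_compl hconn hsub hX'N

end KronProof

namespace KronProof

open Set SimpleGraph

variable {V : Type*} {Θ : SimpleGraph V} {P : Set (Sym2 V) → Prop}

/-- No strictly ascending chain of narrow cuts all containing `u` and avoiding `v`. -/
lemma no_ascending (hconn : Θ.Connected)
    (hsub : ∀ F F' : Set (Sym2 V), F.Finite → F' ⊆ F → P F → P F')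
    {u v : V} (D : ℕ → Set V) (hN : ∀ i, IsPNarrow Θ P (D i))
    (hu : ∀ i, u ∈ D i) (hv : ∀ i, v ∉ D i)
    (hmono : ∀ i, D i ⊆ D (i+1)) (hne : ∀ i, D i ≠ D (i+1)) : False := by
  classical
  have hmono' : ∀ i j, i ≤ j → D i ⊆ D j := by
    intro i j hij
    induction j, hij using Nat.le_induction with
    | base => exact Set.Subset.refl _
    | succ k hk ih => exact ih.trans (hmono k)
  set U := ⋃ i, D i with hU
  set n := (cutBdry Θ (D 0)).ncard with hn
  have hcard : ∀ i, (cutBdry Θ (D i)).ncard = n := fun i =>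
    le_antisymm ((hN i).2 _ (hN 0).1) ((hN 0).2 _ (hN i).1)
  have hbd_mem : ∀ e ∈ cutBdry Θ U, ∃ J, ∀ i, J ≤ i → e ∈ cutBdry Θ (D i) := by
    intro e he
    obtain ⟨p, q, hadj, hp, hq, rfl⟩ := cutBdry_elim' he
    obtain ⟨j, hj⟩ := Set.mem_iUnion.mp hp
    refine ⟨j, fun i hij => mem_cutBdry_of hadj (hmono' j i hij hj) ?_⟩
    exact fun hc => hq (Set.mem_iUnion.2 ⟨i, hc⟩)
  have hfinJ : ∀ T : Set (Sym2 V), T.Finite → T ⊆ cutBdry Θ U →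
      ∃ J, ∀ i, J ≤ i → T ⊆ cutBdry Θ (D i) := by
    intro T hTfin hTsub
    set j : Sym2 V → ℕ := fun e =>
      if h : ∃ J, ∀ i, J ≤ i → e ∈ cutBdry Θ (D i) then h.choose else 0 with hjdef
    obtain ⟨J, hJ⟩ := (hTfin.image j).bddAbove
    refine ⟨J, fun i hJi e heT => ?_⟩
    have hex : ∃ J', ∀ i', J' ≤ i' → e ∈ cutBdry Θ (D i') := hbd_mem e (hTsub heT)
    have hje : ∀ i', j e ≤ i' → e ∈ cutBdry Θ (D i') := by
      simp only [hjdef, dif_pos hex]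
      exact hex.choose_spec
    have hle : j e ≤ J := hJ (Set.mem_image_of_mem j heT)
    exact hje i (hle.trans hJi)
  have hUfin : (cutBdry Θ U).Finite := by
    by_contra hinf
    obtain ⟨T, hTsub, hTfin, hTcard⟩ :=
      Set.Infinite.exists_subset_ncard_eq (hinf : (cutBdry Θ U).Infinite) (n + 1)
    obtain ⟨J, hJ⟩ := hfinJ T hTfin hTsub
    have hDfin : (cutBdry Θ (D J)).Finite := (narrow_twoComp hconn hsub (hN J)).1
    have := Set.ncard_le_ncard (hJ J le_rfl) hDfin
    rw [hTcard, hcard J] at this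
    omega
  obtain ⟨J₀, hJ₀⟩ := hfinJ (cutBdry Θ U) hUfin (Set.Subset.refl _)
  obtain ⟨x, hx1, hx0⟩ : ∃ x, x ∈ D (J₀ + 1) ∧ x ∉ D J₀ := by
    by_contra h
    push_neg at h
    exact hne J₀ (Set.Subset.antisymm (hmono J₀) h)
  have hT := narrow_twoComp hconn hsub (hN J₀)
  have hcc : IsCompOf (Θ.deleteEdges (cutBdry Θ (D J₀))) (D J₀)ᶜ := hT.2.2.2.2
  have hreach : (Θ.deleteEdges (cutBdry Θ (D J₀))).Reachable v x :=
    hcc.reach_of_mem (hv J₀) hx0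
  have hvU : v ∈ Uᶜ := fun hc => by
    obtain ⟨i, hi⟩ := Set.mem_iUnion.mp hc
    exact hv i hi
  have hxU : x ∈ U := Set.mem_iUnion.2 ⟨J₀ + 1, hx1⟩
  obtain ⟨p, q, hpq, hp, hq, -, -⟩ := exists_cross hreach hvU (fun hc => hc hxU)
  have hqU : q ∈ U := Set.not_notMem.mp hq
  have hΘadj : Θ.Adj q p := ((SimpleGraph.deleteEdges_adj.mp hpq).1).symm
  have hg : s(q, p) ∈ cutBdry Θ U := mem_cutBdry_of hΘadj hqU hp
  have hgD : s(q, p) ∈ cutBdry Θ (D J₀) := hJ₀ J₀ le_rfl hg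
  have : s(p, q) ∉ cutBdry Θ (D J₀) := (SimpleGraph.deleteEdges_adj.mp hpq).2
  rw [Sym2.eq_swap] at hgD
  exact this hgD

lemma no_descending (hconn : Θ.Connected)
    (hsub : ∀ F F' : Set (Sym2 V), F.Finite → F' ⊆ F → P F → P F')
    {u v : V} (D : ℕ → Set V) (hN : ∀ i, IsPNarrow Θ P (D i))
    (hu : ∀ i, u ∈ D i) (hv : ∀ i, v ∉ D i)
    (hmono : ∀ i, D (i + 1) ⊆ D i) (hne : ∀ i, D i ≠ D (i + 1)) : False := by
  refine no_ascending hconn hsub (fun i => (D i)ᶜ)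
    (fun i => narrow_compl hconn hsub (hN i)) (u := v) (v := u)
    (fun i => hv i) (fun i hc => hc (hu i))
    (fun i => Set.compl_subset_compl.2 (hmono i)) (fun i h => hne i (compl_injective h))

/-- The fundamental finiteness result: only finitely many narrow cuts contain `u`
on one side and `v` on the other. -/
lemma core_finite (hconn : Θ.Connected)
    (hsub : ∀ F F' : Set (Sym2 V), F.Finite → F' ⊆ F → P F → P F')
    (hunion : ∀ F F' : Set (Sym2 V), F.Finite → F'.Finite → P F → P F' → P (F ∪ F'))
    {u v : V} (hadj : Θ.Adj u v) :
    {D : Set V | IsPNarrow Θ P D ∧ u ∈ D ∧ v ∉ D}.Finite := by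
  classical
  by_contra hinf
  set 𝒟 := {D : Set V | IsPNarrow Θ P D ∧ u ∈ D ∧ v ∉ D} with h𝒟
  have hDinf : 𝒟.Infinite := hinf
  have hmeet : ∀ x ∈ 𝒟, ∀ y ∈ 𝒟, x ∩ y ∈ 𝒟 := by
    intro x hx y hy
    by_cases hn : Nested x y
    · rcases hn with h | h | h | h
      · rw [Set.inter_eq_left.2 h]; exact hx
      · exact absurd (h hx.2.1) (fun hc => hc hy.2.1)
      · exact absurd (h hx.2.2) hy.2.2
      · rw [Set.inter_eq_right.2 (Set.compl_subset_compl.mp h)]; exact hy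
    · obtain ⟨hm, -⟩ := meet_narrow hconn hsub hunion hadj hx.1 hy.1 hx.2.1 hy.2.1
        hx.2.2 hy.2.2 hn
      exact ⟨hm, ⟨hx.2.1, hy.2.1⟩, fun hc => hx.2.2 hc.1⟩
  have hNoDesc : ∀ E : ℕ → Set V, (∀ i, E i ∈ 𝒟) → (∀ i, E (i+1) ⊆ E i) →
      (∀ i, E i ≠ E (i+1)) → False := by
    intro E h1 h2 h3
    exact no_descending hconn hsub E (fun i => (h1 i).1) (fun i => (h1 i).2.1)
      (fun i => (h1 i).2.2) h2 h3
  have hNoAsc : ∀ E : ℕ → Set V, (∀ i, E i ∈ 𝒟) → (∀ i, E i ⊆ E (i+1)) →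
      (∀ i, E i ≠ E (i+1)) → False := by
    intro E h1 h2 h3
    exact no_ascending hconn hsub E (fun i => (h1 i).1) (fun i => (h1 i).2.1)
      (fun i => (h1 i).2.2) h2 h3
  -- stabilized meets: every infinite subset of 𝒟 has a lower bound in 𝒟 below
  -- infinitely many of its members, absorbing all common lower bounds
  have hlower : ∀ A : Set (Set V), A.Infinite → A ⊆ 𝒟 →
      ∃ p ∈ 𝒟, {a ∈ A | p ⊆ a}.Infinite ∧ ∀ s : Set V, (∀ a ∈ A, s ⊆ a) → s ⊆ p := by
    intro A hA hA𝒟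
    have g := hA.natEmbedding
    set q : ℕ → Set V := fun n => Nat.rec ((g 0 : Set V))
      (fun k qk => qk ∩ (g (k+1) : Set V)) n with hqdef
    have hqs : ∀ k, q (k+1) = q k ∩ (g (k+1) : Set V) := fun k => rfl
    have hqD : ∀ k, q k ∈ 𝒟 := by
      intro k
      induction k with
      | zero => exact hA𝒟 (g 0).2
      | succ m ih => exact hmeet _ ih _ (hA𝒟 (g (m+1)).2)
    have hqmono : ∀ N m, N ≤ m → q m ⊆ q N := by
      intro N m hNm
      induction m, hNm using Nat.le_induction with
      | base => exact Set.Subset.refl _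
      | succ k hk ih => exact (Set.inter_subset_left).trans ih
    have hqsubg : ∀ k n, k ≤ n → q n ⊆ (g k : Set V) := by
      intro k n
      induction n with
      | zero =>
        intro hk
        rw [Nat.le_zero.mp hk]
        exact Set.Subset.refl _
      | succ m ih =>
        intro hk
        by_cases hkm : k = m + 1
        · subst hkm
          exact Set.inter_subset_right
        · exact Set.inter_subset_left.trans (ih (by omega))
    have hstab : ∃ N, ∀ m, N ≤ m → q m = q N := by
      by_contra hcon
      push_neg at hcon
      choose f hf1 hf2 using hcon
      set r : ℕ → ℕ := fun n => Nat.rec 0 (fun _ rk => f rk) n with hrdef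
      have hrs : ∀ k, r (k+1) = f (r k) := fun k => rfl
      refine hNoDesc (fun k => q (r k)) (fun k => hqD _) (fun k => ?_) (fun k => ?_)
      · show q (r (k+1)) ⊆ q (r k)
        rw [hrs]
        exact hqmono _ _ (hf1 (r k))
      · show q (r k) ≠ q (r (k+1))
        rw [hrs]
        exact fun h => hf2 (r k) h.symm
    obtain ⟨N, hN⟩ := hstab
    refine ⟨q N, hqD N, ?_, ?_⟩
    · refine Set.infinite_of_injective_forall_mem
        (f := fun k : ℕ => (g (N + k) : Set V)) ?_ ?_
      · intro i j hij
        have := g.injective (Subtype.coe_injective hij)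
        omega
      · intro k
        refine ⟨(g (N + k)).2, ?_⟩
        rw [← hN (N + k) (by omega)]
        exact hqsubg (N + k) (N + k) le_rfl
    · intro s hs
      have : ∀ m, s ⊆ q m := by
        intro m
        induction m with
        | zero => exact hs _ (g 0).2
        | succ k ih => exact Set.subset_inter ih (hs _ (g (k+1)).2)
      exact this N
  -- growth step
  have hgrow : ∀ p ∈ 𝒟, ∀ A : Set (Set V), A.Infinite → A ⊆ 𝒟 → (∀ a ∈ A, p ⊆ a) →
      ∃ p' ∈ 𝒟, p ⊂ p' ∧ {a ∈ A | p' ⊆ a}.Infinite := by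
    intro p hp A hA hA𝒟 hpA
    have hA' : (A \ {p}).Infinite := hA.diff (Set.finite_singleton p)
    have hpfin : (cutBdry Θ p).Finite := (narrow_twoComp hconn hsub hp.1).1
    set O := {z : V | z ∉ p ∧ ∃ f ∈ cutBdry Θ p, z ∈ f} with hO
    have hOfin : O.Finite := (endpoints_finite hpfin).subset (fun z hz => hz.2)
    have hwit : ∀ a ∈ A \ {p}, ∃ z ∈ O, z ∈ a := by
      intro a ha
      have haA : a ∈ A := ha.1
      have hane : a ≠ p := ha.2
      obtain ⟨x, hxa, hxp⟩ : ∃ x, x ∈ a ∧ x ∉ p := by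
        by_contra h
        push_neg at h
        exact hane (Set.Subset.antisymm h (hpA a haA))
      have hacomp : IsCompOf (Θ.deleteEdges (cutBdry Θ a)) a :=
        (narrow_twoComp hconn hsub (hA𝒟 haA).1).2.2.2.1
      have hua : u ∈ a := (hA𝒟 haA).2.1
      have hup : u ∈ p := hp.2.1
      obtain ⟨α, β, hαβ, hα, hβ, hr1, hr2⟩ :=
        exists_cross (hacomp.reach_of_mem hua hxa) hup hxp
      have hβa : β ∈ a := hacomp.reach_mem hua hr2
      have hΘαβ : Θ.Adj α β := (SimpleGraph.deleteEdges_adj.mp hαβ).1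
      refine ⟨β, ⟨hβ, s(α, β), mem_cutBdry_of hΘαβ hα hβ, ?_⟩, hβa⟩
      simp [Sym2.mem_iff]
    have hpig : ∃ z ∈ O, {a | a ∈ A \ {p} ∧ z ∈ a}.Infinite := by
      by_contra hc
      push_neg at hc
      refine hA' (Set.Finite.subset
        (hOfin.biUnion (fun z hz => (hc z hz))) ?_)
      intro a ha
      obtain ⟨z, hzO, hza⟩ := hwit a ha
      exact Set.mem_biUnion hzO ⟨ha, hza⟩
    obtain ⟨z, hzO, hzinf⟩ := hpig
    obtain ⟨p', hp'𝒟, hp'inf, hp'abs⟩ := hlower {a | a ∈ A \ {p} ∧ z ∈ a} hzinf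
      (fun a ha => hA𝒟 ha.1.1)
    have hpp' : p ⊆ p' := hp'abs p (fun a ha => hpA a ha.1.1)
    have hzp' : z ∈ p' := by
      have : p ∪ {z} ⊆ p' := hp'abs (p ∪ {z})
        (fun a ha => Set.union_subset (hpA a ha.1.1) (Set.singleton_subset_iff.2 ha.2))
      exact this (Or.inr rfl)
    refine ⟨p', hp'𝒟, (Set.ssubset_iff_of_subset hpp').2 ⟨z, hzp', hzO.1⟩, ?_⟩
    refine hp'inf.mono ?_
    intro a ha
    exact ⟨ha.1.1.1, ha.2⟩
  -- iterate to get an infinite ascending chain: contradiction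
  set Good : Set V → Prop := fun p => p ∈ 𝒟 ∧ {a ∈ 𝒟 | p ⊆ a}.Infinite with hGood
  have hbase : ∃ p, Good p := by
    obtain ⟨p, hp, hinf', -⟩ := hlower 𝒟 hDinf (Set.Subset.refl _)
    exact ⟨p, hp, hinf'⟩
  have hstep : ∀ p, Good p → ∃ p', Good p' ∧ p ⊂ p' := by
    intro p hp
    obtain ⟨p', hp'𝒟, hss, hinf'⟩ := hgrow p hp.1 {a ∈ 𝒟 | p ⊆ a} hp.2
      (fun a ha => ha.1) (fun a ha => ha.2)
    refine ⟨p', ⟨hp'𝒟, hinf'.mono ?_⟩, hss⟩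
    intro a ha
    exact ⟨ha.1.1, ha.2⟩
  obtain ⟨p₀, hp₀⟩ := hbase
  have hstep' : ∀ p : {p : Set V // Good p}, ∃ p' : {p : Set V // Good p}, (p : Set V) ⊂ p' := by
    intro ⟨p, hp⟩
    obtain ⟨p', hp', hss⟩ := hstep p hp
    exact ⟨⟨p', hp'⟩, hss⟩
  set seq : ℕ → {p : Set V // Good p} := fun n => Nat.rec ⟨p₀, hp₀⟩
    (fun _ pk => (hstep' pk).choose) n with hseqdef
  have hseq : ∀ n, (seq n : Set V) ⊂ (seq (n+1) : Set V) := fun n => (hstep' (seq n)).choose_spec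
  exact hNoAsc (fun n => (seq n : Set V)) (fun n => (seq n).2.1)
    (fun n => (hseq n).subset) (fun n => (hseq n).ne)

end KronProof

namespace KronProof

open Set SimpleGraph

variable {V : Type*} {Θ : SimpleGraph V} {P : Set (Sym2 V) → Prop}

lemma bdry_edge_finite (hconn : Θ.Connected)
    (hsub : ∀ F F' : Set (Sym2 V), F.Finite → F' ⊆ F → P F → P F')
    (hunion : ∀ F F' : Set (Sym2 V), F.Finite → F'.Finite → P F → P F' → P (F ∪ F'))
    (f : Sym2 V) (hf : f ∈ Θ.edgeSet) :
    {D : Set V | IsPNarrow Θ P D ∧ f ∈ cutBdry Θ D}.Finite := by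
  revert hf
  refine Sym2.ind (fun x y => ?_) f
  intro hf
  have hadj : Θ.Adj x y := hf
  refine Set.Finite.subset ((core_finite hconn hsub hunion hadj).union
    (core_finite hconn hsub hunion hadj.symm)) ?_
  rintro D ⟨hD, hfD⟩
  rcases (mem_cutBdry_elim hfD rfl).2 with ⟨h1, h2⟩ | ⟨h1, h2⟩
  · exact Or.inl ⟨hD, h1, h2⟩
  · exact Or.inr ⟨hD, h1, h2⟩

lemma walk_same_side {D : Set V} {x y : V} (w : Θ.Walk x y)
    (h : ∀ e ∈ w.edges, e ∉ cutBdry Θ D) : (x ∈ D ↔ y ∈ D) := by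
  induction w with
  | nil => exact Iff.rfl
  | @cons a b c ha w ih =>
    have h1 : s(a, b) ∉ cutBdry Θ D := h _ (by simp)
    refine (side_iff_of_not_bdry h1 ha).trans (ih ?_)
    intro e he
    exact h e (by simp [he])

lemma side_in_Cside (hconn : Θ.Connected) {D S C : Set V}
    (hDcomp : IsCompOf (Θ.deleteEdges (cutBdry Θ D)) S)
    (hW : ∀ z : V, (∃ f ∈ cutBdry Θ C, z ∈ f) → z ∉ S) :
    S ⊆ C ∨ S ⊆ Cᶜ := by
  obtain ⟨y₀, hy₀⟩ := hDcomp.nonempty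
  by_cases hy₀C : y₀ ∈ C
  · left
    intro z hz
    have hcl : ∀ ⦃p q : V⦄, (Θ.deleteEdges (cutBdry Θ D)).Adj p q → p ∈ S ∩ C → q ∈ S ∩ C := by
      intro p q hadj hp
      have hqS : q ∈ S := hDcomp.adj_mem hp.1 hadj
      refine ⟨hqS, ?_⟩
      by_contra hqC
      have hΘ : Θ.Adj p q := (SimpleGraph.deleteEdges_adj.mp hadj).1
      have hbd : s(p, q) ∈ cutBdry Θ C := mem_cutBdry_of hΘ hp.2 hqC
      exact hW p ⟨s(p,q), hbd, by simp⟩ hp.1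
    exact (reach_closed hcl ⟨hy₀, hy₀C⟩ (hDcomp.reach_of_mem hy₀ hz)).2
  · right
    intro z hz
    have hcl : ∀ ⦃p q : V⦄, (Θ.deleteEdges (cutBdry Θ D)).Adj p q → p ∈ S ∩ Cᶜ → q ∈ S ∩ Cᶜ := by
      intro p q hadj hp
      have hqS : q ∈ S := hDcomp.adj_mem hp.1 hadj
      refine ⟨hqS, ?_⟩
      intro hqC
      have hΘ : Θ.Adj p q := (SimpleGraph.deleteEdges_adj.mp hadj).1
      have hbd : s(p, q) ∈ cutBdry Θ C := mem_cutBdry_of' hΘ hp.2 hqC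
      exact hW p ⟨s(p,q), hbd, by simp⟩ hp.1
    exact (reach_closed hcl ⟨hy₀, hy₀C⟩ (hDcomp.reach_of_mem hy₀ hz)).2

/-- **Part 1**: a narrow cut is non-nested with only finitely many narrow cuts. -/
lemma crossing_finite (hconn : Θ.Connected)
    (hsub : ∀ F F' : Set (Sym2 V), F.Finite → F' ⊆ F → P F → P F')
    (hunion : ∀ F F' : Set (Sym2 V), F.Finite → F'.Finite → P F → P F' → P (F ∪ F'))
    {C : Set V} (hC : IsPNarrow Θ P C) :
    {D : Set V | IsPNarrow Θ P D ∧ ¬ Nested C D}.Finite := by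
  classical
  obtain ⟨hCfin, hCinf, hCcinf, hCcomp, hCccomp⟩ := narrow_twoComp hconn hsub hC
  have hne : (cutBdry Θ C).Nonempty := cutBdry_nonempty hconn hCinf.nonempty hCcinf.nonempty
  set W := {z : V | ∃ f ∈ cutBdry Θ C, z ∈ f} with hWdef
  have hWfin : W.Finite := endpoints_finite hCfin
  obtain ⟨w₀, hw₀⟩ : W.Nonempty := by
    obtain ⟨e₀, he₀⟩ := hne
    obtain ⟨p, q, hadj, hp, hq, rfl⟩ := cutBdry_elim' he₀
    exact ⟨p, ⟨s(p,q), he₀, by simp⟩⟩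
  set wk : ∀ z : V, Θ.Walk w₀ z := fun z => (hconn.preconnected w₀ z).some with hwkdef
  set EH := (⋃ z ∈ W, {e : Sym2 V | e ∈ (wk z).edges}) with hEHdef
  have hEHfin : EH.Finite :=
    hWfin.biUnion (fun z _ => (wk z).edges.finite_toSet)
  have hEHedge : EH ⊆ Θ.edgeSet := by
    intro e he
    rw [hEHdef] at he
    obtain ⟨z, -, he⟩ := Set.mem_iUnion₂.mp he
    exact (wk z).edges_subset_edgeSet he
  refine Set.Finite.subset (Set.Finite.biUnion hEHfin
    (fun f hf => bdry_edge_finite hconn hsub hunion f (hEHedge hf))) ?_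
  rintro D ⟨hD, hnn⟩
  have hDstruct := narrow_twoComp hconn hsub hD
  by_contra hno
  rw [Set.mem_iUnion₂] at hno
  push_neg at hno
  have hno' : ∀ f ∈ EH, f ∉ cutBdry Θ D := by
    intro f hf hc
    exact (hno f hf) ⟨hD, hc⟩
  -- all endpoints of ∂C are on the same side of D as w₀
  have hsame : ∀ z ∈ W, (z ∈ D ↔ w₀ ∈ D) := by
    intro z hz
    refine (walk_same_side (wk z) ?_).symm
    intro e he
    exact hno' e (Set.mem_iUnion₂.mpr ⟨z, hz, he⟩)
  by_cases hw₀D : w₀ ∈ D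
  · -- S := Dᶜ avoids all endpoints of ∂C
    have hW' : ∀ z : V, (∃ f ∈ cutBdry Θ C, z ∈ f) → z ∉ Dᶜ := by
      intro z hzW hzDc
      exact hzDc ((hsame z hzW).2 hw₀D)
    rcases side_in_Cside hconn hDstruct.2.2.2.2 hW' with h | h
    · exact hnn (Or.inr (Or.inr (Or.inl (Set.compl_subset_comm.mp h))))
    · exact hnn (Or.inl (Set.compl_subset_compl.mp h))
  · have hW' : ∀ z : V, (∃ f ∈ cutBdry Θ C, z ∈ f) → z ∉ D := by
      intro z hzW hzD
      exact hw₀D ((hsame z hzW).1 hzD)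
    rcases side_in_Cside hconn hDstruct.2.2.2.1 hW' with h | h
    · exact hnn (Or.inr (Or.inr (Or.inr (Set.compl_subset_compl.mpr h))))
    · exact hnn (Or.inr (Or.inl (Set.subset_compl_comm.mp h)))

end KronProof

namespace KronProof

open Set SimpleGraph

variable {V : Type*} {Θ : SimpleGraph V} {P : Set (Sym2 V) → Prop}

/-- If `E` is nested with both `a` and `b`, and all four corners of `{a,b}` are
nonempty, then `E` or `Eᶜ` is contained in one of the four corners. -/
lemma side_in_some_corner {a b E : Set V}
    (h1 : (a ∩ b).Nonempty) (h2 : (a ∩ bᶜ).Nonempty)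
    (h3 : (aᶜ ∩ b).Nonempty) (h4 : (aᶜ ∩ bᶜ).Nonempty)
    (hEa : Nested E a) (hEb : Nested E b) :
    ∃ S : Set V, (S = E ∨ S = Eᶜ) ∧
      (S ⊆ a ∩ b ∨ S ⊆ a ∩ bᶜ ∨ S ⊆ aᶜ ∩ b ∨ S ⊆ aᶜ ∩ bᶜ) := by
  rcases hEa with hα | hα | hα | hα <;> rcases hEb with hβ | hβ | hβ | hβ
  -- α1 : E ⊆ a
  · exact ⟨E, Or.inl rfl, Or.inl (Set.subset_inter hα hβ)⟩
  · exact ⟨E, Or.inl rfl, Or.inr (Or.inl (Set.subset_inter hα hβ))⟩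
  · -- E ⊆ a, Eᶜ ⊆ b : aᶜ ∩ bᶜ = ∅
    obtain ⟨x, hxa, hxb⟩ := h4
    exact absurd (hβ (fun hxE : x ∈ E => hxa (hα hxE))) hxb
  · -- E ⊆ a, Eᶜ ⊆ bᶜ (b ⊆ E) : aᶜ ∩ b = ∅
    obtain ⟨x, hxa, hxb⟩ := h3
    exact absurd (hα (Set.compl_subset_compl.mp hβ hxb)) hxa
  -- α2 : E ⊆ aᶜ
  · exact ⟨E, Or.inl rfl, Or.inr (Or.inr (Or.inl (Set.subset_inter hα hβ)))⟩
  · exact ⟨E, Or.inl rfl, Or.inr (Or.inr (Or.inr (Set.subset_inter hα hβ)))⟩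
  · -- E ⊆ aᶜ, Eᶜ ⊆ b : a ∩ bᶜ = ∅
    obtain ⟨x, hxa, hxb⟩ := h2
    exact absurd (hβ (fun hxE : x ∈ E => (hα hxE) hxa)) hxb
  · -- E ⊆ aᶜ, b ⊆ E : a ∩ b = ∅
    obtain ⟨x, hxa, hxb⟩ := h1
    exact absurd (hα (Set.compl_subset_compl.mp hβ hxb)) (fun h => h hxa)
  -- α3 : Eᶜ ⊆ a
  · -- Eᶜ ⊆ a, E ⊆ b : aᶜ ∩ bᶜ = ∅
    obtain ⟨x, hxa, hxb⟩ := h4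
    have hxE : x ∈ E := by
      by_contra hxE
      exact hxa (hα hxE)
    exact absurd (hβ hxE) hxb
  · -- Eᶜ ⊆ a, E ⊆ bᶜ : aᶜ ∩ b = ∅
    obtain ⟨x, hxa, hxb⟩ := h3
    have hxE : x ∈ E := by
      by_contra hxE
      exact hxa (hα hxE)
    exact absurd hxb (hβ hxE)
  · exact ⟨Eᶜ, Or.inr rfl, Or.inl (Set.subset_inter hα hβ)⟩
  · exact ⟨Eᶜ, Or.inr rfl, Or.inr (Or.inl (Set.subset_inter hα hβ))⟩
  -- α4 : Eᶜ ⊆ aᶜ (a ⊆ E)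
  · -- a ⊆ E, E ⊆ b : a ∩ bᶜ = ∅
    obtain ⟨x, hxa, hxb⟩ := h2
    exact absurd (hβ (Set.compl_subset_compl.mp hα hxa)) hxb
  · -- a ⊆ E, E ⊆ bᶜ : a ∩ b = ∅
    obtain ⟨x, hxa, hxb⟩ := h1
    exact absurd (hβ (Set.compl_subset_compl.mp hα hxa)) (fun h => h hxb)
  · exact ⟨Eᶜ, Or.inr rfl, Or.inr (Or.inr (Or.inl (Set.subset_inter hα hβ)))⟩
  · exact ⟨Eᶜ, Or.inr rfl, Or.inr (Or.inr (Or.inr (Set.subset_inter hα hβ)))⟩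

/-- A narrow cut whose side lies in a corner of `{a, b}` is nested with any
component `X` of `Θ − (∂a ∪ ∂b)` inside the corner `a ∩ b`. -/
lemma nested_with_comp (hconn : Θ.Connected)
    (hsub : ∀ F F' : Set (Sym2 V), F.Finite → F' ⊆ F → P F → P F')
    {a b E X : Set V} (hE : IsPNarrow Θ P E)
    (hXcomp : IsCompOf (Θ.deleteEdges (cutBdry Θ a ∪ cutBdry Θ b)) X)
    (hXsub : X ⊆ a ∩ b)
    (hcorner : ∃ S : Set V, (S = E ∨ S = Eᶜ) ∧
      (S ⊆ a ∩ b ∨ S ⊆ a ∩ bᶜ ∨ S ⊆ aᶜ ∩ b ∨ S ⊆ aᶜ ∩ bᶜ)) :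
    Nested X E := by
  classical
  obtain ⟨S, hSE, hcor⟩ := hcorner
  have hEstruct := narrow_twoComp hconn hsub hE
  have hScomp : IsCompOf (Θ.deleteEdges (cutBdry Θ E)) S := by
    rcases hSE with rfl | rfl
    · exact hEstruct.2.2.2.1
    · exact hEstruct.2.2.2.2
  have hdicho : S ⊆ X ∨ S ∩ X = ∅ := by
    rcases hcor with hS | hS | hS | hS
    · -- S ⊆ a ∩ b : either meets X and is absorbed, or is disjoint
      by_cases hSX : (S ∩ X).Nonempty
      · left
        obtain ⟨s₀, hs₀S, hs₀X⟩ := hSX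
        intro s hs
        have hreach := hScomp.reach_of_mem hs₀S hs
        refine (reach_closed (S := S ∩ X) ?_ ⟨hs₀S, hs₀X⟩ hreach).2
        intro p q hadj hp
        have hqS : q ∈ S := hScomp.adj_mem hp.1 hadj
        have hΘ : Θ.Adj p q := (SimpleGraph.deleteEdges_adj.mp hadj).1
        have hpab : p ∈ a ∩ b := hS hp.1
        have hqab : q ∈ a ∩ b := hS hqS
        have hnB : s(p, q) ∉ cutBdry Θ a ∪ cutBdry Θ b := by
          rintro (hc | hc)
          · exact not_mem_cutBdry_in hpab.1 hqab.1 hc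
          · exact not_mem_cutBdry_in hpab.2 hqab.2 hc
        exact ⟨hqS, hXcomp.adj_mem hp.2 (deleteEdges_adj_of_not_mem hΘ hnB)⟩
      · right
        exact Set.not_nonempty_iff_eq_empty.mp hSX
    · right
      rw [Set.eq_empty_iff_forall_notMem]
      rintro x ⟨hxS, hxX⟩
      exact (hS hxS).2 (hXsub hxX).2
    · right
      rw [Set.eq_empty_iff_forall_notMem]
      rintro x ⟨hxS, hxX⟩
      exact (hS hxS).1 (hXsub hxX).1
    · right
      rw [Set.eq_empty_iff_forall_notMem]
      rintro x ⟨hxS, hxX⟩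
      exact (hS hxS).1 (hXsub hxX).1
  rcases hSE with rfl | rfl
  · rcases hdicho with h | h
    · exact Or.inr (Or.inr (Or.inr (Set.compl_subset_compl.2 h)))
    · refine Or.inr (Or.inl ?_)
      intro x hx hxE
      rw [Set.eq_empty_iff_forall_notMem] at h
      exact h x ⟨hxE, hx⟩
  · rcases hdicho with h | h
    · exact Or.inr (Or.inr (Or.inl (Set.compl_subset_comm.mp h)))
    · refine Or.inl ?_
      intro x hx
      by_contra hxE
      rw [Set.eq_empty_iff_forall_notMem] at h
      exact h x ⟨hxE, hx⟩

/-- **Part 2 core**: two optimally nested narrow cuts whose main diagonal corners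
are both infinite cannot cross. -/
lemma part2_main (hconn : Θ.Connected)
    (hsub : ∀ F F' : Set (Sym2 V), F.Finite → F' ⊆ F → P F → P F')
    (hunion : ∀ F F' : Set (Sym2 V), F.Finite → F'.Finite → P F → P F' → P (F ∪ F'))
    {a b : Set V} (ha : IsPNarrow Θ P a) (hb : IsPNarrow Θ P b) (hnn : ¬ Nested a b)
    (hK : (a ∩ b).Infinite) (hK' : (aᶜ ∩ bᶜ).Infinite)
    (hma : ∀ D : Set V, IsPNarrow Θ P D →
      {E : Set V | IsPNarrow Θ P E ∧ ¬ Nested a E}.ncard ≤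
        {E : Set V | IsPNarrow Θ P E ∧ ¬ Nested D E}.ncard)
    (hmb : ∀ D : Set V, IsPNarrow Θ P D →
      {E : Set V | IsPNarrow Θ P E ∧ ¬ Nested b E}.ncard ≤
        {E : Set V | IsPNarrow Θ P E ∧ ¬ Nested D E}.ncard) :
    False := by
  classical
  obtain ⟨h1, h2, h3, h4⟩ := not_nested_corners hnn
  obtain ⟨X, X', hXsub, hX'sub, hXinf, hX'inf, hXcomp, hX'comp, hXN, hX'N, -⟩ :=
    corner_comps hconn hsub hunion ha hb (narrow_twoComp hconn hsub ha)
      (narrow_twoComp hconn hsub hb) hK hK'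
  set cr : Set V → Set (Set V) := fun Z => {E : Set V | IsPNarrow Θ P E ∧ ¬ Nested Z E}
    with hcrdef
  have hfin : ∀ Z : Set V, IsPNarrow Θ P Z → (cr Z).Finite := by
    intro Z hZ
    exact crossing_finite hconn hsub hunion hZ
  -- X' is a component for the pair (aᶜ, bᶜ) as well
  have hX'comp2 : IsCompOf (Θ.deleteEdges (cutBdry Θ aᶜ ∪ cutBdry Θ bᶜ)) X' := by
    rwa [cutBdry_compl, cutBdry_compl]
  -- nested with both ⇒ nested with X and with X'
  have hkey : ∀ E : Set V, IsPNarrow Θ P E → Nested a E → Nested b E →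
      Nested X E ∧ Nested X' E := by
    intro E hE hEa hEb
    have hcor := side_in_some_corner h1 h2 h3 h4 (nested_comm hEa) (nested_comm hEb)
    constructor
    · exact nested_with_comp hconn hsub hE hXcomp hXsub hcor
    · refine nested_with_comp hconn hsub hE hX'comp2 hX'sub ?_
      obtain ⟨S, hSE, hc⟩ := hcor
      refine ⟨S, hSE, ?_⟩
      rw [compl_compl, compl_compl]
      tauto
  -- union inclusion
  have hsub1 : cr X ∪ cr X' ⊆ cr a ∪ cr b := by
    rintro E hE
    have hEN : IsPNarrow Θ P E := by
      rcases hE with hE | hE <;> exact hE.1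
    by_cases hEa : Nested a E
    · by_cases hEb : Nested b E
      · obtain ⟨hX1, hX2⟩ := hkey E hEN hEa hEb
        rcases hE with hE | hE
        · exact absurd hX1 hE.2
        · exact absurd hX2 hE.2
      · exact Or.inr ⟨hEN, hEb⟩
    · exact Or.inl ⟨hEN, hEa⟩
  -- intersection inclusion
  have hsub2 : cr X ∩ cr X' ⊆ cr a ∩ cr b := by
    rintro E ⟨hEX, hEX'⟩
    constructor
    · refine ⟨hEX.1, ?_⟩
      intro h
      rcases h with h | h | h | h
      · exact hEX.2 (Or.inl ((hXsub.trans Set.inter_subset_left).trans h))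
      · exact hEX.2 (Or.inr (Or.inl ((hXsub.trans Set.inter_subset_left).trans h)))
      · exact hEX'.2 (Or.inl ((hX'sub.trans Set.inter_subset_left).trans h))
      · exact hEX'.2 (Or.inr (Or.inl ((hX'sub.trans Set.inter_subset_left).trans h)))
    · refine ⟨hEX.1, ?_⟩
      intro h
      rcases h with h | h | h | h
      · exact hEX.2 (Or.inl ((hXsub.trans Set.inter_subset_right).trans h))
      · exact hEX.2 (Or.inr (Or.inl ((hXsub.trans Set.inter_subset_right).trans h)))
      · exact hEX'.2 (Or.inl ((hX'sub.trans Set.inter_subset_right).trans h))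
      · exact hEX'.2 (Or.inr (Or.inl ((hX'sub.trans Set.inter_subset_right).trans h)))
  -- a and b are nested with X and X'
  have hnXa : Nested X a := Or.inl (hXsub.trans Set.inter_subset_left)
  have hnXb : Nested X b := Or.inl (hXsub.trans Set.inter_subset_right)
  have hnX'a : Nested X' a := Or.inr (Or.inl (hX'sub.trans Set.inter_subset_left))
  have hnX'b : Nested X' b := Or.inr (Or.inl (hX'sub.trans Set.inter_subset_right))
  have hanotin : a ∉ cr X ∪ cr X' := by
    rintro (h | h)
    · exact h.2 hnXa
    · exact h.2 hnX'a
  have hbnotin : b ∉ cr X ∪ cr X' := by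
    rintro (h | h)
    · exact h.2 hnXb
    · exact h.2 hnX'b
  have haneb : a ≠ b := by
    rintro rfl
    exact hnn (nested_refl a)
  have hain : a ∈ cr b := ⟨ha, fun h => hnn (nested_comm h)⟩
  have hbin : b ∈ cr a := ⟨hb, hnn⟩
  -- cardinality bookkeeping
  have hfa := hfin a ha
  have hfb := hfin b hb
  have hfX := hfin X hXN
  have hfX' := hfin X' hX'N
  have e1 : (cr X ∪ cr X').ncard + (cr X ∩ cr X').ncard = (cr X).ncard + (cr X').ncard :=
    Set.ncard_union_add_ncard_inter _ _ hfX hfX'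
  have e2 : (cr a ∪ cr b).ncard + (cr a ∩ cr b).ncard = (cr a).ncard + (cr b).ncard :=
    Set.ncard_union_add_ncard_inter _ _ hfa hfb
  have hpair : ({a, b} : Set (Set V)).ncard = 2 := Set.ncard_pair haneb
  have hd : Disjoint (cr X ∪ cr X') ({a, b} : Set (Set V)) := by
    rw [Set.disjoint_right]
    rintro z (rfl | rfl)
    · exact hanotin
    · exact hbnotin
  have hU2 : (cr X ∪ cr X') ∪ ({a, b} : Set (Set V)) ⊆ cr a ∪ cr b := by
    rintro z (hz | hz)
    · exact hsub1 hz
    · rcases hz with rfl | rfl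
      · exact Or.inr hain
      · exact Or.inl hbin
  have c1 : ((cr X ∪ cr X') ∪ ({a, b} : Set (Set V))).ncard =
      (cr X ∪ cr X').ncard + 2 := by
    rw [Set.ncard_union_eq hd ((hfX.union hfX')) ((Set.finite_singleton b).insert a),
      hpair]
  have c2 : ((cr X ∪ cr X') ∪ ({a, b} : Set (Set V))).ncard ≤ (cr a ∪ cr b).ncard :=
    Set.ncard_le_ncard hU2 (hfa.union hfb)
  have c3 : (cr X ∩ cr X').ncard ≤ (cr a ∩ cr b).ncard :=
    Set.ncard_le_ncard hsub2 (hfa.subset Set.inter_subset_left)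
  have m1 : (cr a).ncard ≤ (cr X).ncard := hma X hXN
  have m2 : (cr b).ncard ≤ (cr X').ncard := hmb X' hX'N
  omega

end KronProof

/-- Let `P` be a property of finite edge sets of a connected graph, stable under
subsets and finite unions, and suppose a `P`-cut exists.  Then every `P`-narrow
cut is non-nested with only finitely many `P`-narrow cuts, and any two
*optimally nested* `P`-narrow cuts (those minimising the number `m(C)` of
`P`-narrow cuts not nested with them) are nested with each other. -/
theorem optimally_nested_cuts_are_nested
    {V : Type*} (Θ : SimpleGraph V) (hconn : Θ.Connected)
    (P : Set (Sym2 V) → Prop)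
    (hsub : ∀ F F' : Set (Sym2 V), F.Finite → F' ⊆ F → P F → P F')
    (hunion : ∀ F F' : Set (Sym2 V), F.Finite → F'.Finite → P F → P F' → P (F ∪ F'))
    (hex : ∃ C : Set V, IsPCut Θ P C) :
    -- `m(C)` is finite :
    (∀ C : Set V, IsPNarrow Θ P C →
      {D : Set V | IsPNarrow Θ P D ∧ ¬ Nested C D}.Finite) ∧
    -- optimally nested `P`-narrow cuts are nested with each other :
    (∀ C C' : Set V, IsPNarrow Θ P C → IsPNarrow Θ P C' →
      (∀ D : Set V, IsPNarrow Θ P D →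
        {E : Set V | IsPNarrow Θ P E ∧ ¬ Nested C E}.ncard ≤
          {E : Set V | IsPNarrow Θ P E ∧ ¬ Nested D E}.ncard) →
      (∀ D : Set V, IsPNarrow Θ P D →
        {E : Set V | IsPNarrow Θ P E ∧ ¬ Nested C' E}.ncard ≤
          {E : Set V | IsPNarrow Θ P E ∧ ¬ Nested D E}.ncard) →
      Nested C C') := by
  classical
  constructor
  · intro C hC
    exact KronProof.crossing_finite hconn hsub hunion hC
  · intro C C' hC hC' hmC hmC'
    by_contra hnn
    rcases KronProof.exists_infinite_diag (KronProof.narrow_twoComp hconn hsub hC)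
      (KronProof.narrow_twoComp hconn hsub hC') with ⟨hK, hK'⟩ | ⟨hK, hK'⟩
    · exact KronProof.part2_main hconn hsub hunion hC hC' hnn hK hK' hmC hmC'
    · -- cross diagonal: replace C' by its complement
      have hC'c : IsPNarrow Θ P C'ᶜ := KronProof.narrow_compl hconn hsub hC'
      have hnn2 : ¬ Nested C C'ᶜ := fun h => hnn (KronProof.nested_compl_right.mp h)
      have hK2 : (C ∩ C'ᶜ).Infinite := hK
      have hK2' : (Cᶜ ∩ C'ᶜᶜ).Infinite := by rwa [compl_compl]
      have hmC'c : ∀ D : Set V, IsPNarrow Θ P D →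
          {E : Set V | IsPNarrow Θ P E ∧ ¬ Nested C'ᶜ E}.ncard ≤
            {E : Set V | IsPNarrow Θ P E ∧ ¬ Nested D E}.ncard := by
        intro D hD
        have heq : {E : Set V | IsPNarrow Θ P E ∧ ¬ Nested C'ᶜ E} =
            {E : Set V | IsPNarrow Θ P E ∧ ¬ Nested C' E} := by
          ext E
          simp only [Set.mem_setOf_eq, KronProof.nested_compl_left]
        rw [heq]
        exact hmC' D hD
      exact KronProof.part2_main hconn hsub hunion hC hC'c hnn2 hK2 hK2' hmC hmC'c
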